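/- arXiv:1403.1505 — 3 statements merged into one kernel-verified Lean document; each statement's English description precedes it below -/
import Mathlib

section
/- Let φ be an N-function and w a weight on I. Then for every f ∈ L⁰(I), ‖f‖⁰_{ρ_φ(M_W,L¹)} = ‖f‖⁰_{M_{φ,w}}, i.e. inf{ ‖g‖_{M_W} + ‖h‖_{L¹} : g, h ∈ L⁰(I), f* = ρ_φ(|g|,|h|) } = inf_{k>0} (P_{φ,w}(kf) + 1)/k. -/
open MeasureTheory Set Filter
open scoped ENNReal

noncomputable section

/-- The decreasing rearrangement of `f` with respect to Lebesgue measure on `I`. -/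
def decRearr (I : Set ℝ) (f : ℝ → ℝ) (t : ℝ) : ℝ :=
  sInf {l : ℝ | 0 < l ∧ volume {s | s ∈ I ∧ l < |f s|} ≤ ENNReal.ofReal t}

/-- `φ(a/b)·b` with the convention `φ(c/0)·0 = 0` if `c = 0` and `= ∞` if `c ≠ 0`. -/
def phiRatio (φ : ℝ → ℝ) (a b : ℝ) : ℝ≥0∞ :=
  if b = 0 then (if a = 0 then 0 else ⊤) else ENNReal.ofReal (φ (a / b) * b)

/-- Submajorization `g ≺ w` on `I` : `∫₀ᵗ g* ≤ ∫₀ᵗ w` for all `t ∈ I`. -/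
def Submaj (I : Set ℝ) (w g : ℝ → ℝ) : Prop :=
  ∀ t ∈ I, ∫⁻ s in Ioo (0:ℝ) t, ENNReal.ofReal (decRearr I g s)
      ≤ ∫⁻ s in Ioo (0:ℝ) t, ENNReal.ofReal (w s)

/-- The modular `P_{φ,w}(f) = inf { ∫_I φ(f*/|g|)|g| : g ≺ w }`. -/
def Pmod (I : Set ℝ) (φ w f : ℝ → ℝ) : ℝ≥0∞ :=
  sInf { v : ℝ≥0∞ | ∃ g : ℝ → ℝ, Measurable g ∧ Submaj I w g ∧
      v = ∫⁻ t in I, phiRatio φ (decRearr I f t) |g t| }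

/-- The modular `I_{φ,w}(f) = ∫_I φ(f*) w`. -/
def Imod (I : Set ℝ) (φ w f : ℝ → ℝ) : ℝ≥0∞ :=
  ∫⁻ t in I, ENNReal.ofReal (φ (decRearr I f t) * w t)

/-- The Marcinkiewicz norm `‖g‖_{M_W} = sup_{t ∈ I, t > 0} (∫₀ᵗ g*)/W(t)`. -/
def MWnorm (I : Set ℝ) (w g : ℝ → ℝ) : ℝ≥0∞ :=
  ⨆ t ∈ I ∩ Ioi (0:ℝ),
    (∫⁻ s in Ioo (0:ℝ) t, ENNReal.ofReal (decRearr I g s)) /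
      ENNReal.ofReal (∫ s in Ioo (0:ℝ) t, w s)

/-- An Orlicz function: `φ(0) = 0`, `φ` convex, strictly increasing, `[0,∞) → [0,∞)`. -/
def OrliczOn (φ : ℝ → ℝ) : Prop :=
  φ 0 = 0 ∧ ConvexOn ℝ (Ici 0) φ ∧ StrictMonoOn φ (Ici 0) ∧ ∀ t, 0 ≤ t → 0 ≤ φ t

/-- An N-function: an Orlicz function with `φ(t)/t → 0` at `0⁺` and `φ(t)/t → ∞` at `∞`. -/
def NFun (φ : ℝ → ℝ) : Prop :=
  OrliczOn φ ∧ Tendsto (fun t => φ t / t) (nhdsWithin 0 (Ioi 0)) (nhds 0) ∧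
    Tendsto (fun t => φ t / t) atTop atTop

/-- The complementary function `φ*(s) = sup_{t ≥ 0} (st - φ(t))`. -/
def phiStar (φ : ℝ → ℝ) (s : ℝ) : ℝ := sSup ((fun t => s * t - φ t) '' Ici 0)

/-- The (generalized) inverse of an Orlicz function. -/
def phiInv (φ : ℝ → ℝ) (s : ℝ) : ℝ := sInf {t : ℝ | 0 ≤ t ∧ s ≤ φ t}

/-- The Calderón–Lozanovskii function `ρ_φ(t,s) = φ⁻¹(s/t)·t`. -/
def rhoFun (φ : ℝ → ℝ) (t s : ℝ) : ℝ := phiInv φ (s / t) * t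

/-- A weight on `I`: positive, decreasing and locally integrable. -/
def IsWeight (I : Set ℝ) (w : ℝ → ℝ) : Prop :=
  (∀ t ∈ I, 0 < w t) ∧ AntitoneOn w I ∧ ∀ t ∈ I, IntegrableOn w (Ioo 0 t)

/-- `I = [0,α)` with `0 < α ≤ ∞`. -/
def OLDomain (I : Set ℝ) : Prop := I = Ici 0 ∨ ∃ α : ℝ, 0 < α ∧ I = Ico 0 α

/-- The step function `Σ aᵢ χ_{[tᵢ₋₁,tᵢ)}`. -/
def stepFun (n : ℕ) (tt : Fin (n+1) → ℝ) (a : Fin n → ℝ) (s : ℝ) : ℝ :=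
  ∑ i : Fin n, if tt i.castSucc ≤ s ∧ s < tt i.succ then a i else 0

/-- `R(a,b) = F(a,b)/W(a,b)` where `F(a,b) = ∫_a^b f`, `W(a,b) = ∫_a^b w`. -/
def Rquot (w f : ℝ → ℝ) (a b : ℝ) : ℝ :=
  (∫ s in Ioo a b, f s) / (∫ s in Ioo a b, w s)

/-- `(a,b)` is a level interval of `f` with respect to `w`. -/
def IsLI (I : Set ℝ) (w f : ℝ → ℝ) (a b : ℝ) : Prop :=
  0 ≤ a ∧ a < b ∧ Ioo a b ⊆ I ∧ 0 < Rquot w f a b ∧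
    ∀ t ∈ Ioo a b, Rquot w f a t ≤ Rquot w f a b

/-- `(a,b)` is a maximal level interval of `f` with respect to `w`. -/
def IsMLI (I : Set ℝ) (w f : ℝ → ℝ) (a b : ℝ) : Prop :=
  IsLI I w f a b ∧ ∀ a' b', IsLI I w f a' b' → Ioo a b ⊆ Ioo a' b' → a = a' ∧ b = b'

/-- `f0` is a level function of `f` with respect to `w`. -/
def IsLevelFun (I : Set ℝ) (w f f0 : ℝ → ℝ) : Prop :=
  (∀ a b, IsMLI I w f a b → ∀ t ∈ Ioo a b, f0 t = Rquot w f a b * w t) ∧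
  (∀ t ∈ I, (∀ a b, IsMLI I w f a b → t ∉ Ioo a b) → f0 t = f t)

/-- The Köthe dual norm of the Orlicz–Lorentz space `Λ_{φ,w}` with the Luxemburg norm. -/
def KDnorm (I : Set ℝ) (φ w f : ℝ → ℝ) : ℝ≥0∞ :=
  sSup { v : ℝ≥0∞ | ∃ g : ℝ → ℝ, Measurable g ∧
      ({ε : ℝ | 0 < ε ∧ Imod I φ w (fun t => g t / ε) ≤ 1}).Nonempty ∧
      sInf {ε : ℝ | 0 < ε ∧ Imod I φ w (fun t => g t / ε) ≤ 1} ≤ 1 ∧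
      IntegrableOn (fun t => f t * g t) I ∧
      v = ENNReal.ofReal (∫ t in I, f t * g t) }

open scoped Pointwise

lemma decRearr_nonneg (I : Set ℝ) (f : ℝ → ℝ) (t : ℝ) : 0 ≤ decRearr I f t :=
  Real.sInf_nonneg (fun _ hx => hx.1.le)

lemma decRearr_set_mono (I : Set ℝ) (f : ℝ → ℝ) {t t' : ℝ} (h : t ≤ t') :
    {l : ℝ | 0 < l ∧ volume {s | s ∈ I ∧ l < |f s|} ≤ ENNReal.ofReal t}
      ⊆ {l : ℝ | 0 < l ∧ volume {s | s ∈ I ∧ l < |f s|} ≤ ENNReal.ofReal t'} :=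
  fun l hl => ⟨hl.1, hl.2.trans (ENNReal.ofReal_le_ofReal h)⟩

lemma decRearr_measurable (I : Set ℝ) (f : ℝ → ℝ) : Measurable (decRearr I f) := by
  apply measurable_of_Ioi
  intro c
  rcases lt_or_ge c 0 with hc | hc
  · have : decRearr I f ⁻¹' Ioi c = univ := by
      ext t; simp only [mem_preimage, mem_Ioi, mem_univ, iff_true]
      exact lt_of_lt_of_le hc (decRearr_nonneg I f t)
    rw [this]; exact MeasurableSet.univ
  · have hoc : (decRearr I f ⁻¹' Ioi c).OrdConnected := by
      constructor
      intro x hx y hy z hz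
      simp only [mem_preimage, mem_Ioi] at hx hy ⊢
      have hSx : {l : ℝ | 0 < l ∧ volume {s | s ∈ I ∧ l < |f s|} ≤ ENNReal.ofReal x}.Nonempty := by
        by_contra hne
        rw [not_nonempty_iff_eq_empty] at hne
        rw [decRearr, hne, Real.sInf_empty] at hx
        exact absurd hx (not_lt.mpr hc)
      have hSz : {l : ℝ | 0 < l ∧ volume {s | s ∈ I ∧ l < |f s|} ≤ ENNReal.ofReal z}.Nonempty :=
        hSx.mono (decRearr_set_mono I f hz.1)
      calc c < decRearr I f y := hy
        _ ≤ decRearr I f z :=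
          csInf_le_csInf ⟨0, fun l hl => hl.1.le⟩ hSz (decRearr_set_mono I f hz.2)
    exact hoc.measurableSet

lemma decRearr_congr (I : Set ℝ) (f g : ℝ → ℝ) (h : ∀ s, |f s| = |g s|) :
    decRearr I f = decRearr I g := by
  unfold decRearr
  ext t
  congr 1
  ext l
  simp only [mem_setOf_eq]
  constructor <;> (rintro ⟨h1, h2⟩; refine ⟨h1, ?_⟩)
  · convert h2 using 3; ext s; rw [h s]
  · convert h2 using 3; ext s; rw [h s]

lemma decRearr_smul (I : Set ℝ) (f : ℝ → ℝ) {c : ℝ} (hc : 0 < c) (t : ℝ) :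
    decRearr I (fun s => c * f s) t = c * decRearr I f t := by
  unfold decRearr
  have : {l : ℝ | 0 < l ∧ volume {s | s ∈ I ∧ l < |c * f s|} ≤ ENNReal.ofReal t}
      = c • {l : ℝ | 0 < l ∧ volume {s | s ∈ I ∧ l < |f s|} ≤ ENNReal.ofReal t} := by
    ext l
    simp only [mem_smul_set, mem_setOf_eq, smul_eq_mul]
    constructor
    · rintro ⟨hl, hv⟩
      refine ⟨l / c, ⟨div_pos hl hc, ?_⟩, by field_simp⟩
      convert hv using 3
      ext s
      rw [abs_mul, abs_of_pos hc, div_lt_iff₀' hc]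
    · rintro ⟨l', ⟨hl', hv⟩, rfl⟩
      refine ⟨by positivity, ?_⟩
      convert hv using 3
      ext s
      rw [abs_mul, abs_of_pos hc, mul_lt_mul_iff_right₀ hc]
  rw [this, Real.sInf_smul_of_nonneg hc.le, smul_eq_mul]

lemma decRearr_zero (I : Set ℝ) (t : ℝ) : decRearr I (fun _ => (0:ℝ)) t = 0 := by
  unfold decRearr
  have : {l : ℝ | 0 < l ∧ volume {s | s ∈ I ∧ l < |(0:ℝ)|} ≤ ENNReal.ofReal t} = Ioi 0 := by
    ext l
    simp only [mem_setOf_eq, mem_Ioi, abs_zero]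
    constructor
    · exact fun h => h.1
    · intro hl
      refine ⟨hl, ?_⟩
      have : {s | s ∈ I ∧ l < (0:ℝ)} = ∅ := by
        ext s; simp only [mem_setOf_eq, mem_empty_iff_false, iff_false]
        rintro ⟨_, h⟩; linarith
      rw [this]; simp
  rw [this, csInf_Ioi]

lemma phiInv_nonneg (φ : ℝ → ℝ) (s : ℝ) : 0 ≤ phiInv φ s :=
  Real.sInf_nonneg (fun _ hx => hx.1)

lemma phiInv_phi (φ : ℝ → ℝ) (hφ : OrliczOn φ) {u : ℝ} (hu : 0 ≤ u) :
    phiInv φ (φ u) = u := by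
  have hmem : u ∈ {t : ℝ | 0 ≤ t ∧ φ u ≤ φ t} := ⟨hu, le_refl _⟩
  have hlb : ∀ t ∈ {t : ℝ | 0 ≤ t ∧ φ u ≤ φ t}, u ≤ t := by
    rintro t ⟨ht0, htu⟩
    by_contra hlt
    push_neg at hlt
    exact absurd htu (not_le.mpr (hφ.2.2.1 ht0 hu hlt))
  exact le_antisymm (csInf_le ⟨u, hlb⟩ hmem) (le_csInf ⟨u, hmem⟩ hlb)

lemma phi_phiInv (φ : ℝ → ℝ) (hφ : NFun φ) {s : ℝ} (hs : 0 ≤ s) :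
    φ (phiInv φ s) = s := by
  obtain ⟨⟨hz, hconv, hsm, hnn⟩, _, htop⟩ := hφ
  set T := {t : ℝ | 0 ≤ t ∧ s ≤ φ t} with hT
  have hTne : T.Nonempty := by
    obtain ⟨t, ht1, ht2⟩ :=
      ((htop.eventually_ge_atTop (max s 1)).and (eventually_ge_atTop (1:ℝ))).exists
    have ht0 : (0:ℝ) < t := lt_of_lt_of_le one_pos ht2
    refine ⟨t, ht0.le, ?_⟩
    have : φ t ≥ (max s 1) * t := by
      rw [ge_iff_le, ← le_div_iff₀ ht0]; exact ht1
    calc s ≤ max s 1 := le_max_left _ _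
      _ = max s 1 * 1 := (mul_one _).symm
      _ ≤ max s 1 * t := by
          apply mul_le_mul_of_nonneg_left ht2 (le_trans zero_le_one (le_max_right _ _))
      _ ≤ φ t := this
  have hbdd : BddBelow T := ⟨0, fun t ht => ht.1⟩
  set τ := sInf T with hτdef
  have hτ0 : 0 ≤ τ := le_csInf hTne (fun t ht => ht.1)
  have hmono : MonotoneOn φ (Ici 0) := hsm.monotoneOn
  have hM : τ ≤ τ + 1 := by linarith
  have hφM0 : 0 ≤ φ (τ + 1) := hnn _ (by linarith)
  have hφτM : φ τ ≤ φ (τ + 1) := hmono hτ0 (by simp only [mem_Ici]; linarith) hM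
  -- Claim 1 : s ≤ φ τ
  have hclaim1 : s ≤ φ τ := by
    apply le_of_forall_pos_le_add
    intro ε hε
    set K := φ (τ + 1) - φ τ with hK
    have hK0 : 0 ≤ K := by simp [hK]; linarith
    set δ : ℝ := min (ε / (K + 1)) 1 with hδdef
    have hδ0 : 0 < δ := lt_min (by positivity) one_pos
    obtain ⟨t, htT, htlt⟩ := exists_lt_of_csInf_lt hTne (show τ < τ + δ by linarith)
    have htτ : τ ≤ t := csInf_le hbdd htT
    rcases eq_or_lt_of_le htτ with heq | hlt
    · calc s ≤ φ t := htT.2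
        _ = φ τ := by rw [← heq]
        _ ≤ φ τ + ε := by linarith
    · -- τ < t < τ + δ ≤ τ + 1
      have htM : t ≤ τ + 1 := by
        have : δ ≤ 1 := min_le_right _ _
        linarith
      set lam : ℝ := (τ + 1) - t with hlam
      have hlam0 : 0 ≤ lam := by linarith
      have hlam1 : 0 ≤ 1 - lam := by simp [hlam]; linarith
      have hcomb := hconv.2 (show τ ∈ Ici (0:ℝ) from hτ0)
        (show τ + 1 ∈ Ici (0:ℝ) by simp; linarith) hlam0 hlam1 (by ring)
      have hpt : lam • τ + (1 - lam) • (τ + 1) = t := by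
        simp only [smul_eq_mul, hlam]; ring
      rw [hpt] at hcomb
      simp only [smul_eq_mul] at hcomb
      have h1 : φ t ≤ φ τ + (t - τ) * K := by
        have : 1 - lam = t - τ := by simp [hlam]; ring
        nlinarith [hcomb]
      have h2 : (t - τ) * K ≤ ε := by
        have htd : t - τ ≤ ε / (K + 1) := by
          have : δ ≤ ε / (K + 1) := min_le_left _ _
          linarith
        have : (t - τ) * K ≤ (ε / (K + 1)) * K :=
          mul_le_mul_of_nonneg_right htd hK0
        have h3 : (ε / (K + 1)) * K ≤ ε := by
          rw [div_mul_eq_mul_div, div_le_iff₀ (by linarith)]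
          nlinarith
        exact this.trans h3
      calc s ≤ φ t := htT.2
        _ ≤ φ τ + ε := by linarith
  -- Claim 2 : φ τ ≤ s
  have hclaim2 : φ τ ≤ s := by
    rcases eq_or_lt_of_le hτ0 with heq0 | hτpos
    · rw [← heq0, hz]; exact hs
    by_contra hgt
    push_neg at hgt
    -- pick t close to τ from below
    set η : ℝ := min ((φ τ - s) / (φ (τ + 1) + 1)) τ with hη
    have hη0 : 0 < η := lt_min (div_pos (by linarith) (by linarith)) hτpos
    set t : ℝ := τ - η / 2 with ht
    have ht0 : 0 < t := by
      have : η ≤ τ := min_le_right _ _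
      simp only [ht]; linarith
    have htτ : t < τ := by simp only [ht]; linarith
    set lam : ℝ := 1 / (τ + 1 - t) with hlam
    have hden : (1:ℝ) ≤ τ + 1 - t := by linarith
    have hlam0 : 0 < lam := by positivity
    have hlam1 : lam ≤ 1 := by
      rw [hlam, div_le_one (by linarith)]; linarith
    have hcomb := hconv.2 (show t ∈ Ici (0:ℝ) from ht0.le)
      (show τ + 1 ∈ Ici (0:ℝ) by simp; linarith) hlam0.le
      (show (0:ℝ) ≤ 1 - lam by linarith) (by ring)
    have hpt : lam • t + (1 - lam) • (τ + 1) = τ := by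
      simp only [smul_eq_mul, hlam]
      field_simp
      ring
    rw [hpt] at hcomb
    simp only [smul_eq_mul] at hcomb
    -- (1 - lam) ≤ τ - t
    have h1lam : 1 - lam ≤ τ - t := by
      have hinv : 2 - (τ + 1 - t) ≤ 1/(τ + 1 - t) := by
        rw [le_div_iff₀ (by linarith)]
        nlinarith
      rw [hlam]
      linarith
    have hτt : τ - t ≤ (φ τ - s) / (φ (τ + 1) + 1) := by
      have : η ≤ (φ τ - s) / (φ (τ + 1) + 1) := min_le_left _ _
      simp only [ht]; linarith
    have hkey : (1 - lam) * φ (τ + 1) < φ τ - s := by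
      have h2 : (τ - t) * φ (τ + 1) ≤ ((φ τ - s) / (φ (τ + 1) + 1)) * (φ (τ + 1)) :=
        mul_le_mul_of_nonneg_right hτt hφM0
      have h3 : ((φ τ - s) / (φ (τ + 1) + 1)) * (φ (τ + 1)) < φ τ - s := by
        rw [div_mul_eq_mul_div, div_lt_iff₀ (by linarith)]
        nlinarith
      have h4 : (1 - lam) * φ (τ + 1) ≤ (τ - t) * φ (τ + 1) :=
        mul_le_mul_of_nonneg_right h1lam hφM0
      calc (1 - lam) * φ (τ + 1) ≤ (τ - t) * φ (τ + 1) := h4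
        _ ≤ (φ τ - s) / (φ (τ + 1) + 1) * φ (τ + 1) := h2
        _ < φ τ - s := h3
    -- lam * φ t ≥ φ τ - (1-lam) φ(τ+1) > s ≥ lam * s
    have h5 : lam * φ t > s := by nlinarith [hcomb]
    have h6 : s < φ t := by nlinarith [h5, hlam1, hlam0, hs]
    have : t ∈ T := ⟨ht0.le, h6.le⟩
    exact absurd (csInf_le hbdd this) (not_le.mpr htτ)
  have : τ ∈ Ici (0:ℝ) := hτ0
  exact le_antisymm hclaim2 hclaim1


theorem statement4 (I : Set ℝ) (hI : OLDomain I) (φ w : ℝ → ℝ)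
    (hφ : NFun φ) (hw : IsWeight I w) (f : ℝ → ℝ) (hf : Measurable f) :
    sInf { v : ℝ≥0∞ | ∃ g h : ℝ → ℝ, Measurable g ∧ Measurable h ∧
        (∀ᵐ t ∂(volume.restrict I), decRearr I f t = rhoFun φ |g t| |h t|) ∧
        v = MWnorm I w g + ∫⁻ t in I, ENNReal.ofReal |h t| }
    = ⨅ k ∈ Ioi (0:ℝ),
        (Pmod I φ w (fun t => k * f t) + 1) / ENNReal.ofReal k := by
  obtain ⟨⟨hφ0, hφconv, hφsm, hφnn⟩, hφat0, hφtop⟩ := hφ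
  have hφfull : NFun φ := ⟨⟨hφ0, hφconv, hφsm, hφnn⟩, hφat0, hφtop⟩
  set φ' : ℝ → ℝ := fun x => φ (max x 0) with hφ'def
  have hφ'mono : Monotone φ' := fun a b hab =>
    hφsm.monotoneOn (le_max_right a 0) (le_max_right b 0) (max_le_max hab le_rfl)
  have hφ'meas : Measurable φ' := hφ'mono.measurable
  have hφ'eq : ∀ x, 0 ≤ x → φ' x = φ x := fun x hx => by
    simp only [hφ'def, max_eq_left hx]
  have hIsub : ∀ {t : ℝ}, t ∈ I → Ioo (0:ℝ) t ⊆ I := by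
    intro t ht s hs
    rcases hI with h1 | ⟨α, hα, h2⟩
    · rw [h1]; exact hs.1.le
    · rw [h2]; rw [h2] at ht; exact ⟨hs.1.le, lt_trans hs.2 ht.2⟩
  -- W(t) as a lintegral and its positivity
  have hDen : ∀ t ∈ I, ENNReal.ofReal (∫ s in Ioo (0:ℝ) t, w s)
      = ∫⁻ s in Ioo (0:ℝ) t, ENNReal.ofReal (w s) := by
    intro t ht
    apply ofReal_integral_eq_lintegral_ofReal (hw.2.2 t ht)
    refine (ae_restrict_iff' measurableSet_Ioo).mpr (ae_of_all _ fun s hs => ?_)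
    exact (hw.1 s (hIsub ht hs)).le
  have hWpos : ∀ t ∈ I, 0 < t → 0 < ∫ s in Ioo (0:ℝ) t, w s := by
    intro t ht htpos
    have hconst : ∫ s in Ioo (0:ℝ) t, w t ≤ ∫ s in Ioo (0:ℝ) t, w s := by
      apply setIntegral_mono_on
      · exact integrableOn_const (by rw [Real.volume_Ioo]; exact ENNReal.ofReal_ne_top)
      · exact hw.2.2 t ht
      · exact measurableSet_Ioo
      · intro s hs
        exact hw.2.1 (hIsub ht hs) ht hs.2.le
    have : ∫ s in Ioo (0:ℝ) t, w t = (volume (Ioo (0:ℝ) t)).toReal * w t := by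
      rw [setIntegral_const, smul_eq_mul, measureReal_def]
    rw [this, Real.volume_Ioo] at hconst
    have hwt : 0 < w t := hw.1 t ht
    have : 0 < (ENNReal.ofReal (t - 0)).toReal * w t := by
      rw [ENNReal.toReal_ofReal (by linarith)]
      have : (0:ℝ) < t - 0 := by linarith
      positivity
    linarith
  apply le_antisymm
  · -- LHS ≤ RHS
    apply le_iInf₂
    intro k hk
    simp only [mem_Ioi] at hk
    set c := ENNReal.ofReal k with hcdef
    have hc0 : c ≠ 0 := by simp [hcdef, hk]
    have hcT : c ≠ ⊤ := ENNReal.ofReal_ne_top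
    -- key claim : for every member v of the Pmod set, LHS ≤ (v+1)/c
    have key : ∀ v ∈ { v : ℝ≥0∞ | ∃ g : ℝ → ℝ, Measurable g ∧ Submaj I w g ∧
        v = ∫⁻ t in I, phiRatio φ (decRearr I (fun t => k * f t) t) |g t| },
        sInf { v : ℝ≥0∞ | ∃ g h : ℝ → ℝ, Measurable g ∧ Measurable h ∧
          (∀ᵐ t ∂(volume.restrict I), decRearr I f t = rhoFun φ |g t| |h t|) ∧
          v = MWnorm I w g + ∫⁻ t in I, ENNReal.ofReal |h t| } ≤ (v + 1) / c := by
      rintro v ⟨g, hgmeas, hgsub, rfl⟩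
      set D := decRearr I f with hDdef
      have hDk : ∀ t, decRearr I (fun s => k * f s) t = k * D t := decRearr_smul I f hk
      -- rewrite the integrand into measurable form
      have hint_eq : (fun t => phiRatio φ (decRearr I (fun s => k * f s) t) |g t|)
          = fun t => if |g t| = 0 then (if k * D t = 0 then 0 else (⊤:ℝ≥0∞))
              else ENNReal.ofReal (φ' (k * D t / |g t|) * |g t|) := by
        funext t
        rw [phiRatio, hDk t]
        by_cases h0 : |g t| = 0
        · simp [h0]
        · simp only [h0, if_false]
          rw [hφ'eq _ (div_nonneg (mul_nonneg hk.le (decRearr_nonneg I f t)) (abs_nonneg _))]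
      by_cases hv : (∫⁻ t in I, phiRatio φ (decRearr I (fun s => k * f s) t) |g t|) = ⊤
      · rw [hv, top_add, ENNReal.top_div_of_ne_top hcT]
        exact le_top
      have hmeas_int : Measurable (fun t => if |g t| = 0 then
          (if k * D t = 0 then 0 else (⊤:ℝ≥0∞))
          else ENNReal.ofReal (φ' (k * D t / |g t|) * |g t|)) := by
        have h1 : MeasurableSet {t : ℝ | |g t| = 0} := hgmeas.abs (measurableSet_singleton 0)
        have h2 : MeasurableSet {t : ℝ | k * D t = 0} :=
          (measurable_const.mul (decRearr_measurable I f)) (measurableSet_singleton 0)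
        exact Measurable.ite h1 (Measurable.ite h2 measurable_const measurable_const)
          (((hφ'meas.comp ((measurable_const.mul (decRearr_measurable I f)).div
            hgmeas.abs)).mul hgmeas.abs).ennreal_ofReal)
      have hae_fin : ∀ᵐ t ∂(volume.restrict I), |g t| = 0 → D t = 0 := by
        rw [hint_eq] at hv
        filter_upwards [ae_lt_top hmeas_int hv] with t hlt h0
        rw [if_pos h0] at hlt
        by_contra hD0
        have : k * D t ≠ 0 := mul_ne_zero (ne_of_gt hk) hD0
        rw [if_neg this] at hlt
        exact absurd hlt (lt_irrefl _)
      -- construct the decomposition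
      set G : ℝ → ℝ := fun t => (1/k) * g t with hGdef
      set H : ℝ → ℝ := fun t => if |g t| = 0 then 0
          else φ' (k * D t / |g t|) * |g t| / k with hHdef
      have hGmeas : Measurable G := measurable_const.mul hgmeas
      have hHmeas : Measurable H := by
        apply Measurable.ite (hgmeas.abs (measurableSet_singleton 0)) measurable_const
        exact (((hφ'meas.comp ((measurable_const.mul (decRearr_measurable I f)).div
          hgmeas.abs)).mul hgmeas.abs)).div_const k
      have hHnonneg : ∀ t, 0 ≤ H t := by
        intro t
        rw [hHdef]
        by_cases h0 : |g t| = 0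
        · simp [h0]
        · simp only [h0, if_false]
          have : 0 ≤ φ' (k * D t / |g t|) := hφnn _ (le_max_right _ 0)
          positivity
      have hGabs : ∀ t, |G t| = |g t| / k := by
        intro t
        rw [hGdef]
        simp only
        rw [abs_mul, abs_of_pos (by positivity : (0:ℝ) < 1/k)]
        ring
      have hae2 : ∀ᵐ t ∂(volume.restrict I), decRearr I f t = rhoFun φ |G t| |H t| := by
        filter_upwards [hae_fin] with t hgt
        by_cases h0 : |g t| = 0
        · have hD0 : D t = 0 := hgt h0
          rw [rhoFun, hGabs t, h0]
          simp only [zero_div, div_zero, mul_zero]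
          exact hD0
        · have hgpos : 0 < |g t| := lt_of_le_of_ne (abs_nonneg _) (Ne.symm h0)
          have hHt : H t = φ (k * D t / |g t|) * |g t| / k := by
            rw [hHdef]
            simp only [h0, if_false]
            rw [hφ'eq _ (div_nonneg (mul_nonneg hk.le (decRearr_nonneg I f t)) (abs_nonneg _))]
          have harg : 0 ≤ k * D t / |g t| :=
            div_nonneg (mul_nonneg hk.le (decRearr_nonneg I f t)) (abs_nonneg _)
          have hφarg : 0 ≤ φ (k * D t / |g t|) := hφnn _ harg
          rw [rhoFun, hGabs t, abs_of_nonneg (hHnonneg t), hHt]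
          have hdiv : φ (k * D t / |g t|) * |g t| / k / (|g t| / k) = φ (k * D t / |g t|) := by
            field_simp
          rw [hdiv, phiInv_phi φ ⟨hφ0, hφconv, hφsm, hφnn⟩ harg]
          rw [hDdef]
          field_simp
      -- bound the MW norm of G
      have hMWG : MWnorm I w G ≤ c⁻¹ := by
        rw [MWnorm]
        apply iSup₂_le
        intro t ht
        have hdecG : ∀ s, decRearr I G s = (1/k) * decRearr I g s := by
          intro s
          rw [hGdef]
          exact decRearr_smul I g (by positivity) s
        have hNumG : (∫⁻ s in Ioo (0:ℝ) t, ENNReal.ofReal (decRearr I G s))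
            = ENNReal.ofReal (1/k) * ∫⁻ s in Ioo (0:ℝ) t, ENNReal.ofReal (decRearr I g s) := by
          rw [← lintegral_const_mul' _ _ ENNReal.ofReal_ne_top]
          congr 1
          funext s
          rw [hdecG s, ENNReal.ofReal_mul (by positivity)]
        have hsub := hgsub t ht.1
        have hkinv : ENNReal.ofReal (1/k) = c⁻¹ := by
          rw [one_div, ENNReal.ofReal_inv_of_pos hk, hcdef]
        rw [hNumG, hkinv]
        apply ENNReal.div_le_of_le_mul
        rw [hDen t ht.1]
        exact mul_le_mul_right hsub _
      -- bound the L¹ norm of H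
      have hL1H : (∫⁻ t in I, ENNReal.ofReal |H t|)
          ≤ c⁻¹ * ∫⁻ t in I, phiRatio φ (decRearr I (fun s => k * f s) t) |g t| := by
        rw [← lintegral_const_mul' _ _ (ENNReal.inv_ne_top.mpr hc0)]
        apply lintegral_mono
        intro t
        show ENNReal.ofReal |H t| ≤ c⁻¹ * phiRatio φ (decRearr I (fun s => k * f s) t) |g t|
        by_cases h0 : |g t| = 0
        · rw [hHdef]
          simp [h0]
        · have hHt : H t = φ (k * D t / |g t|) * |g t| / k := by
            rw [hHdef]
            simp only [h0, if_false]
            rw [hφ'eq _ (div_nonneg (mul_nonneg hk.le (decRearr_nonneg I f t)) (abs_nonneg _))]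
          have hφarg : 0 ≤ φ (k * D t / |g t|) :=
            hφnn _ (div_nonneg (mul_nonneg hk.le (decRearr_nonneg I f t)) (abs_nonneg _))
          rw [abs_of_nonneg (hHnonneg t), hHt, phiRatio, hDk t, if_neg h0]
          have heq : φ (k * D t / |g t|) * |g t| / k
              = (1/k) * (φ (k * D t / |g t|) * |g t|) := by ring
          rw [heq, ENNReal.ofReal_mul (by positivity), one_div,
            ENNReal.ofReal_inv_of_pos hk, ← hcdef]
      -- conclude
      have hmem : MWnorm I w G + (∫⁻ t in I, ENNReal.ofReal |H t|) ∈
          { v : ℝ≥0∞ | ∃ g h : ℝ → ℝ, Measurable g ∧ Measurable h ∧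
            (∀ᵐ t ∂(volume.restrict I), decRearr I f t = rhoFun φ |g t| |h t|) ∧
            v = MWnorm I w g + ∫⁻ t in I, ENNReal.ofReal |h t| } :=
        ⟨G, H, hGmeas, hHmeas, hae2, rfl⟩
      refine (sInf_le hmem).trans ?_
      calc MWnorm I w G + (∫⁻ t in I, ENNReal.ofReal |H t|)
          ≤ c⁻¹ + c⁻¹ * ∫⁻ t in I, phiRatio φ (decRearr I (fun s => k * f s) t) |g t| :=
            add_le_add hMWG hL1H
        _ = ((∫⁻ t in I, phiRatio φ (decRearr I (fun s => k * f s) t) |g t|) + 1) / c := by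
            rw [ENNReal.add_div, ENNReal.div_eq_inv_mul, ENNReal.div_eq_inv_mul]
            rw [mul_one, add_comm]
      -- done
    -- now use the key claim with the sInf
    by_cases hP : Pmod I φ w (fun t => k * f t) = ⊤
    · rw [hP, top_add, ENNReal.top_div_of_ne_top hcT]
      exact le_top
    apply ENNReal.le_of_forall_pos_le_add
    intro ε hε _
    have hεc : (ε : ℝ≥0∞) * c ≠ 0 := mul_ne_zero (by exact_mod_cast hε.ne') hc0
    have hlt : Pmod I φ w (fun t => k * f t) < Pmod I φ w (fun t => k * f t) + (ε : ℝ≥0∞) * c :=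
      ENNReal.lt_add_right hP hεc
    rw [Pmod] at hlt
    obtain ⟨v, hvS, hvlt⟩ := sInf_lt_iff.mp hlt
    refine (key v hvS).trans ?_
    calc (v + 1) / c ≤ (Pmod I φ w (fun t => k * f t) + (ε : ℝ≥0∞) * c + 1) / c := by
          apply ENNReal.div_le_div_right
          exact add_le_add hvlt.le le_rfl
      _ = (Pmod I φ w (fun t => k * f t) + 1) / c + (ε : ℝ≥0∞) := by
          rw [show Pmod I φ w (fun t => k * f t) + (ε : ℝ≥0∞) * c + 1
              = (Pmod I φ w (fun t => k * f t) + 1) + (ε : ℝ≥0∞) * c by ring]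
          rw [ENNReal.add_div, mul_div_assoc, ENNReal.div_self hc0 hcT, mul_one]
  · -- RHS ≤ LHS
    apply le_sInf
    rintro v ⟨g, h, hgmeas, hhmeas, hae, rfl⟩
    apply ENNReal.le_of_forall_pos_le_add
    intro ε hε hlt'
    set A := MWnorm I w g with hAdef
    set B := (∫⁻ t in I, ENNReal.ofReal |h t|) with hBdef
    have hA : A ≠ ⊤ := (lt_of_le_of_lt le_self_add hlt').ne
    set a : ℝ := A.toReal + (ε : ℝ) with hadef
    have hεpos : (0:ℝ) < (ε:ℝ) := hε
    have ha : 0 < a := by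
      have := ENNReal.toReal_nonneg (a := A)
      rw [hadef]; linarith
    set k : ℝ := 1/a with hkdef
    have hk : 0 < k := by positivity
    have hofk : ENNReal.ofReal k = (ENNReal.ofReal a)⁻¹ := by
      rw [hkdef, one_div, ENNReal.ofReal_inv_of_pos ha]
    have hofk0 : ENNReal.ofReal k ≠ 0 := by simp [hk]
    have hofkT : ENNReal.ofReal k ≠ ⊤ := ENNReal.ofReal_ne_top
    have hAa : A ≤ ENNReal.ofReal a := by
      rw [← ENNReal.ofReal_toReal hA]
      apply ENNReal.ofReal_le_ofReal
      rw [hadef]; linarith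
    have hkA : ENNReal.ofReal k * A ≤ 1 := by
      calc ENNReal.ofReal k * A ≤ ENNReal.ofReal k * ENNReal.ofReal a :=
            mul_le_mul_right hAa _
        _ = 1 := by
            rw [hofk, ENNReal.inv_mul_cancel (by simp [ha]) ENNReal.ofReal_ne_top]
    -- the witness for Pmod
    set g' : ℝ → ℝ := fun t => k * |g t| with hg'def
    have hg'meas : Measurable g' := measurable_const.mul hgmeas.abs
    have hdecg' : ∀ s, decRearr I g' s = k * decRearr I g s := by
      intro s
      rw [hg'def]
      rw [decRearr_smul I (fun t => |g t|) hk s,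
        decRearr_congr I (fun t => |g t|) g (fun s => by rw [abs_abs])]
    have hNum : ∀ t ∈ I, (∫⁻ s in Ioo (0:ℝ) t, ENNReal.ofReal (decRearr I g s))
        ≤ A * ∫⁻ s in Ioo (0:ℝ) t, ENNReal.ofReal (w s) := by
      intro t ht
      rcases le_or_gt t 0 with ht0 | ht0
      · rw [Ioo_eq_empty (by linarith), Measure.restrict_empty, lintegral_zero_measure]
        exact zero_le
      · have hle : (∫⁻ s in Ioo (0:ℝ) t, ENNReal.ofReal (decRearr I g s)) /
            ENNReal.ofReal (∫ s in Ioo (0:ℝ) t, w s) ≤ A := by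
          rw [hAdef, MWnorm]
          exact le_iSup₂ (f := fun (t:ℝ) (_ : t ∈ I ∩ Ioi (0:ℝ)) =>
            (∫⁻ s in Ioo (0:ℝ) t, ENNReal.ofReal (decRearr I g s)) /
              ENNReal.ofReal (∫ s in Ioo (0:ℝ) t, w s)) t ⟨ht, ht0⟩
        have hden0 : ENNReal.ofReal (∫ s in Ioo (0:ℝ) t, w s) ≠ 0 := by
          simp only [ne_eq, ENNReal.ofReal_eq_zero, not_le]
          exact hWpos t ht ht0
        have := (ENNReal.div_le_iff_le_mul (Or.inl hden0)
          (Or.inl ENNReal.ofReal_ne_top)).mp hle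
        rw [hDen t ht] at this
        exact this
    have hsub' : Submaj I w g' := by
      intro t ht
      have : (∫⁻ s in Ioo (0:ℝ) t, ENNReal.ofReal (decRearr I g' s))
          = ENNReal.ofReal k * ∫⁻ s in Ioo (0:ℝ) t, ENNReal.ofReal (decRearr I g s) := by
        rw [← lintegral_const_mul' _ _ ENNReal.ofReal_ne_top]
        congr 1
        funext s
        rw [hdecg' s, ENNReal.ofReal_mul hk.le]
      rw [this]
      calc ENNReal.ofReal k * ∫⁻ s in Ioo (0:ℝ) t, ENNReal.ofReal (decRearr I g s)
          ≤ ENNReal.ofReal k * (A * ∫⁻ s in Ioo (0:ℝ) t, ENNReal.ofReal (w s)) :=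
            mul_le_mul_right (hNum t ht) _
        _ = (ENNReal.ofReal k * A) * ∫⁻ s in Ioo (0:ℝ) t, ENNReal.ofReal (w s) := by ring
        _ ≤ 1 * ∫⁻ s in Ioo (0:ℝ) t, ENNReal.ofReal (w s) := mul_le_mul_left hkA _
        _ = ∫⁻ s in Ioo (0:ℝ) t, ENNReal.ofReal (w s) := one_mul _
    -- the value of the Pmod integrand is a.e. bounded by k·|h|
    have hDk : ∀ t, decRearr I (fun s => k * f s) t = k * decRearr I f t := decRearr_smul I f hk
    have hbound : ∀ᵐ t ∂(volume.restrict I),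
        phiRatio φ (decRearr I (fun s => k * f s) t) |g' t|
          ≤ ENNReal.ofReal k * ENNReal.ofReal |h t| := by
      filter_upwards [hae] with t hρ
      have hg'abs : |g' t| = k * |g t| := by
        rw [hg'def]
        simp only
        rw [abs_mul, abs_of_pos hk, abs_abs]
      by_cases h0 : |g t| = 0
      · have hD0 : decRearr I f t = 0 := by
          rw [hρ, rhoFun, h0, mul_zero]
        rw [phiRatio, hDk t, hD0, mul_zero, hg'abs, h0, mul_zero]
        simp
      · have hgpos : 0 < |g t| := lt_of_le_of_ne (abs_nonneg _) (Ne.symm h0)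
        have hg'0 : |g' t| ≠ 0 := by
          rw [hg'abs]
          positivity
        rw [phiRatio, if_neg hg'0, hDk t, hg'abs]
        have harg : k * decRearr I f t / (k * |g t|) = phiInv φ (|h t| / |g t|) := by
          rw [hρ, rhoFun]
          field_simp
        rw [harg, phi_phiInv φ hφfull (div_nonneg (abs_nonneg _) (abs_nonneg _))]
        have : |h t| / |g t| * (k * |g t|) = k * |h t| := by
          field_simp
        rw [this, ENNReal.ofReal_mul hk.le]
    have hPle : Pmod I φ w (fun t => k * f t) ≤ ENNReal.ofReal k * B := by
      have hmem : (∫⁻ t in I, phiRatio φ (decRearr I (fun s => k * f s) t) |g' t|) ∈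
          { v : ℝ≥0∞ | ∃ g : ℝ → ℝ, Measurable g ∧ Submaj I w g ∧
            v = ∫⁻ t in I, phiRatio φ (decRearr I (fun s => k * f s) t) |g t| } :=
        ⟨g', hg'meas, hsub', rfl⟩
      refine (sInf_le hmem).trans ?_
      calc (∫⁻ t in I, phiRatio φ (decRearr I (fun s => k * f s) t) |g' t|)
          ≤ ∫⁻ t in I, ENNReal.ofReal k * ENNReal.ofReal |h t| := lintegral_mono_ae hbound
        _ = ENNReal.ofReal k * B := by
            rw [hBdef, ← lintegral_const_mul' _ _ ENNReal.ofReal_ne_top]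
    -- conclude
    have hstep : (⨅ k ∈ Ioi (0:ℝ), (Pmod I φ w (fun t => k * f t) + 1) / ENNReal.ofReal k)
        ≤ (Pmod I φ w (fun t => k * f t) + 1) / ENNReal.ofReal k :=
      iInf₂_le k hk
    refine hstep.trans ?_
    calc (Pmod I φ w (fun t => k * f t) + 1) / ENNReal.ofReal k
        ≤ (ENNReal.ofReal k * B + 1) / ENNReal.ofReal k := by
          apply ENNReal.div_le_div_right
          exact add_le_add hPle le_rfl
      _ = B + (ENNReal.ofReal k)⁻¹ := by
          rw [ENNReal.add_div]
          rw [mul_comm, mul_div_assoc, ENNReal.div_self hofk0 hofkT, mul_one]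
          rw [ENNReal.div_eq_inv_mul, mul_one]
      _ = B + ENNReal.ofReal a := by rw [hofk, inv_inv]
      _ = B + (A + (ε : ℝ≥0∞)) := by
          rw [hadef, ENNReal.ofReal_add ENNReal.toReal_nonneg hεpos.le,
            ENNReal.ofReal_toReal hA, ENNReal.ofReal_coe_nnreal]
      _ = A + B + (ε : ℝ≥0∞) := by ring
end
end

section
/- Let φ be an N-function, w a weight on I, and f = Σ_{i=1}^n a_i·χ_{A_i} with a_1 > a_2 > … > a_n > 0, A_i = [t_{i−1}, t_i), 0 = t_0 < t_1 < … < t_n < ∞, t_n ∈ I. If g = Σ_{i=1}^n b_i·χ_{A_i} with b_1 ≥ b_2 ≥ … ≥ b_n > 0 is a minimizing function for P_{φ,w}(f) (i.e. g ≺ w and ∫_I φ(f/g)·g = P_{φ,w}(f)), then G(t_n) = ∫₀^{t_n} g = ∫₀^{t_n} w = W(t_n). -/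
open MeasureTheory Set Filter
open scoped ENNReal

noncomputable section

section Aux

lemma nfun_ratio_mul {φ : ℝ → ℝ} (hφ : NFun φ) {p q : ℝ} (hp : 0 < p) (hpq : p ≤ q) :
    φ p * q ≤ φ q * p := by
  obtain ⟨⟨h0, hconv, hsm, hnn⟩, hlim, -⟩ := id hφ
  have hq : 0 < q := lt_of_lt_of_le hp hpq
  have ha : (0:ℝ) ≤ 1 - p / q := by rw [sub_nonneg, div_le_one hq]; exact hpq
  have hb : (0:ℝ) ≤ p / q := by positivity
  have hab : (1 - p / q) + (p / q) = 1 := by ring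
  have hcv := hconv.2 (Set.mem_Ici.2 (le_refl (0:ℝ))) (Set.mem_Ici.2 hq.le) ha hb hab
  simp only [smul_eq_mul, mul_zero, zero_add, h0] at hcv
  rw [div_mul_cancel₀ _ hq.ne'] at hcv
  have h2 := mul_le_mul_of_nonneg_right hcv hq.le
  have e : p / q * φ q * q = φ q * p := by field_simp
  linarith [e ▸ h2]

lemma nfun_ratio_lt {φ : ℝ → ℝ} (hφ : NFun φ) {u v : ℝ} (hu : 0 < u) (huv : u < v) :
    φ u * v < φ v * u := by
  obtain ⟨⟨h0, hconv, hsm, hnn⟩, hlim, -⟩ := id hφ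
  have hv : 0 < v := hu.trans huv
  rcases lt_or_eq_of_le (nfun_ratio_mul hφ hu huv.le) with h | heq
  · exact h
  exfalso
  set C := φ v / v with hC
  have hφv : 0 < φ v := by rw [← h0]; exact hsm (Set.mem_Ici.2 (le_refl (0:ℝ))) (Set.mem_Ici.2 hv.le) hv
  have hCpos : 0 < C := div_pos hφv hv
  have hv' : φ v = C * v := by rw [hC]; field_simp
  have hu' : φ u = C * u := by
    have : φ u * v = C * u * v := by rw [heq, hv']; ring
    have hvne : v ≠ 0 := hv.ne'
    field_simp at this; nlinarith
  have heventual : ∀ s, 0 < s → s < u → φ s = C * s := by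
    intro s hs hsu
    have h1 : φ s ≤ C * s := by
      have := nfun_ratio_mul hφ hs (le_of_lt (hsu.trans huv))
      rw [hv'] at this; nlinarith
    have h2 : C * s ≤ φ s := by
      set lam := (v - u) / (v - s) with hlam
      have hvs : 0 < v - s := by linarith
      have hlam0 : 0 < lam := div_pos (by linarith) hvs
      have hlam1 : lam < 1 := by rw [hlam, div_lt_one hvs]; linarith
      have hcomb : lam * s + (1 - lam) * v = u := by
        rw [hlam]; field_simp; ring
      have hb2 : (0:ℝ) ≤ 1 - lam := by linarith
      have hab2 : lam + (1 - lam) = 1 := by ring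
      have hcv := hconv.2 (Set.mem_Ici.2 hs.le) (Set.mem_Ici.2 hv.le) hlam0.le hb2 hab2
      simp only [smul_eq_mul, hcomb] at hcv
      rw [hu', hv'] at hcv
      nlinarith
    linarith
  have htend : Filter.Tendsto (fun t => φ t / t) (nhdsWithin 0 (Set.Ioi 0)) (nhds C) := by
    apply Filter.Tendsto.congr' _ tendsto_const_nhds
    filter_upwards [Ioo_mem_nhdsGT_of_mem (Set.left_mem_Ico.2 hu)] with t ht
    rw [heventual t ht.1 ht.2, mul_div_assoc, div_self (ne_of_gt ht.1), mul_one]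
  have := tendsto_nhds_unique htend hlim
  linarith

lemma nfun_phiRatio_lt {φ : ℝ → ℝ} (hφ : NFun φ) {A u v : ℝ} (hA : 0 < A)
    (hu : 0 < u) (huv : u < v) : φ (A / v) * v < φ (A / u) * u := by
  have hv : 0 < v := hu.trans huv
  have h1 : 0 < A / v := by positivity
  have h2 : A / v < A / u := by
    rw [div_lt_div_iff₀ hv hu]; nlinarith
  have key := nfun_ratio_lt hφ h1 h2
  have e : φ (A / v) * (A / u) * (u * v) = (φ (A / v) * v) * A := by field_simp
  have e2 : φ (A / u) * (A / v) * (u * v) = (φ (A / u) * u) * A := by field_simp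
  nlinarith [mul_lt_mul_of_pos_right key (mul_pos hu hv)]

end Aux
section Aux2

lemma stepFun_nonneg {n : ℕ} (tt : Fin (n+1) → ℝ) {β : Fin n → ℝ} (hβ : ∀ i, 0 ≤ β i) (s : ℝ) :
    0 ≤ stepFun n tt β s :=
  Finset.sum_nonneg fun i _ => by split <;> simp [hβ i]

lemma stepFun_apply {n : ℕ} {tt : Fin (n+1) → ℝ} (httm : StrictMono tt) (β : Fin n → ℝ)
    {s : ℝ} {i : Fin n} (h1 : tt i.castSucc ≤ s) (h2 : s < tt i.succ) :
    stepFun n tt β s = β i := by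
  rw [stepFun, Finset.sum_eq_single_of_mem i (Finset.mem_univ i)]
  · rw [if_pos ⟨h1, h2⟩]
  · intro j _ hji
    rw [if_neg]
    rintro ⟨hj1, hj2⟩
    rcases lt_or_gt_of_ne hji with hlt | hlt
    · have hv : (j:ℕ) < (i:ℕ) := hlt
      have hle : (j.succ : Fin (n+1)) ≤ i.castSucc := by
        rw [Fin.le_def, Fin.val_succ, Fin.coe_castSucc]; omega
      have := httm.monotone hle
      linarith
    · have hv : (i:ℕ) < (j:ℕ) := hlt
      have hle : (i.succ : Fin (n+1)) ≤ j.castSucc := by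
        rw [Fin.le_def, Fin.val_succ, Fin.coe_castSucc]; omega
      have := httm.monotone hle
      linarith

lemma stepFun_eq_zero_of_ge {n : ℕ} {tt : Fin (n+1) → ℝ} (httm : StrictMono tt) (β : Fin n → ℝ)
    {s : ℝ} (hs : tt (Fin.last n) ≤ s) : stepFun n tt β s = 0 := by
  rw [stepFun]; apply Finset.sum_eq_zero; intro i _
  rw [if_neg]; rintro ⟨-, h2⟩
  have : tt i.succ ≤ tt (Fin.last n) := httm.monotone (Fin.le_last _)
  linarith

lemma stepFun_eq_zero_of_neg {n : ℕ} {tt : Fin (n+1) → ℝ} (httm : StrictMono tt)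
    (htt0 : tt 0 = 0) (β : Fin n → ℝ) {s : ℝ} (hs : s < 0) : stepFun n tt β s = 0 := by
  rw [stepFun]; apply Finset.sum_eq_zero; intro i _
  rw [if_neg]; rintro ⟨h1, -⟩
  have : tt 0 ≤ tt i.castSucc := httm.monotone (Fin.zero_le _)
  rw [htt0] at this
  linarith

lemma exists_block {n : ℕ} (hn : 0 < n) {tt : Fin (n+1) → ℝ} (httm : StrictMono tt)
    (htt0 : tt 0 = 0) {s : ℝ} (h0 : 0 ≤ s) (hT : s < tt (Fin.last n)) :
    ∃ i : Fin n, tt i.castSucc ≤ s ∧ s < tt i.succ := by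
  classical
  set J := Finset.univ.filter (fun i : Fin n => tt i.castSucc ≤ s) with hJ
  have hne : J.Nonempty := by
    refine ⟨⟨0, hn⟩, ?_⟩
    have h00 : (Fin.castSucc (⟨0, hn⟩ : Fin n)) = 0 := by ext; simp
    simp only [hJ, Finset.mem_filter, Finset.mem_univ, true_and, h00, htt0]
    exact h0
  set i := J.max' hne with hi
  have hmem : i ∈ J := J.max'_mem hne
  have h1 : tt i.castSucc ≤ s := by
    simpa only [hJ, Finset.mem_filter, Finset.mem_univ, true_and] using hmem
  refine ⟨i, h1, ?_⟩
  by_contra hs2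
  push_neg at hs2
  by_cases hlast : (i : ℕ) + 1 = n
  · have he : i.succ = Fin.last n := by ext; simp [hlast]
    rw [he] at hs2; linarith
  · have hlt : (i : ℕ) + 1 < n := lt_of_le_of_ne i.isLt hlast
    have hi'J : (⟨(i:ℕ)+1, hlt⟩ : Fin n) ∈ J := by
      have he : (Fin.castSucc (⟨(i:ℕ)+1, hlt⟩ : Fin n)) = i.succ := by ext; simp
      simp only [hJ, Finset.mem_filter, Finset.mem_univ, true_and, he]
      exact hs2
    have hle := J.le_max' _ hi'J
    rw [Fin.le_def] at hle
    simp only [← hi] at hle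
    omega

lemma iUnion_blocks {n : ℕ} (hn : 0 < n) {tt : Fin (n+1) → ℝ} (httm : StrictMono tt)
    (htt0 : tt 0 = 0) :
    (⋃ i : Fin n, Set.Ico (tt i.castSucc) (tt i.succ)) = Set.Ico 0 (tt (Fin.last n)) := by
  ext s
  simp only [Set.mem_iUnion, Set.mem_Ico]
  constructor
  · rintro ⟨i, hi1, hi2⟩
    have hl : tt 0 ≤ tt i.castSucc := httm.monotone (Fin.zero_le _)
    rw [htt0] at hl
    exact ⟨le_trans hl hi1, lt_of_lt_of_le hi2 (httm.monotone (Fin.le_last _))⟩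
  · rintro ⟨h0, hT⟩; exact exists_block hn httm htt0 h0 hT

lemma mem_block_of_ne_zero {n : ℕ} {tt : Fin (n+1) → ℝ} {β : Fin n → ℝ} {x : ℝ}
    (hx : stepFun n tt β x ≠ 0) : ∃ i : Fin n, tt i.castSucc ≤ x ∧ x < tt i.succ := by
  rw [stepFun] at hx
  obtain ⟨i, -, hi⟩ := Finset.exists_ne_zero_of_sum_ne_zero hx
  refine ⟨i, ?_⟩
  by_contra h
  rw [if_neg h] at hi
  exact hi rfl

lemma stepFun_eq_indicator {n : ℕ} (tt : Fin (n+1) → ℝ) (β : Fin n → ℝ) :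
    stepFun n tt β = fun s => ∑ i : Fin n,
      (Set.Ico (tt i.castSucc) (tt i.succ)).indicator (fun _ => β i) s := by
  funext s; rw [stepFun]
  refine Finset.sum_congr rfl fun i _ => ?_
  rw [Set.indicator_apply]
  simp [Set.mem_Ico]

lemma stepFun_measurable {n : ℕ} (tt : Fin (n+1) → ℝ) (β : Fin n → ℝ) :
    Measurable (stepFun n tt β) := by
  rw [stepFun_eq_indicator]
  exact Finset.measurable_sum _ fun i _ => measurable_const.indicator measurableSet_Ico

lemma stepFun_integrable {n : ℕ} (tt : Fin (n+1) → ℝ) (β : Fin n → ℝ) :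
    MeasureTheory.Integrable (stepFun n tt β) := by
  rw [stepFun_eq_indicator]
  apply MeasureTheory.integrable_finset_sum
  intro i _
  rw [MeasureTheory.integrable_indicator_iff measurableSet_Ico]
  refine MeasureTheory.integrableOn_const ?_
  rw [Real.volume_Ico]
  exact ENNReal.ofReal_ne_top

end Aux2
section Aux3
open MeasureTheory

lemma decRearr_stepFun {n : ℕ} (hn : 0 < n) {tt : Fin (n+1) → ℝ} (httm : StrictMono tt)
    (htt0 : tt 0 = 0) {I : Set ℝ} (hIT : Set.Icc 0 (tt (Fin.last n)) ⊆ I)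
    {β : Fin n → ℝ} (hβ : Antitone β) (hβpos : ∀ i, 0 < β i)
    {s : ℝ} (hs : 0 ≤ s) :
    decRearr I (stepFun n tt β) s = stepFun n tt β s := by
  have habs : ∀ x, |stepFun n tt β x| = stepFun n tt β x :=
    fun x => abs_of_nonneg (stepFun_nonneg tt (fun i => (hβpos i).le) x)
  have httnn : ∀ j : Fin (n+1), 0 ≤ tt j := by
    intro j
    have := httm.monotone (Fin.zero_le j)
    rw [htt0] at this; exact this
  by_cases hsT : s < tt (Fin.last n)
  · obtain ⟨j, hj1, hj2⟩ := exists_block hn httm htt0 hs hsT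
    have hset : {l : ℝ | 0 < l ∧ volume {x | x ∈ I ∧ l < |stepFun n tt β x|} ≤ ENNReal.ofReal s}
        = Set.Ici (β j) := by
      ext l
      simp only [Set.mem_setOf_eq, Set.mem_Ici]
      constructor
      · rintro ⟨hl, hvol⟩
        by_contra hlb
        push_neg at hlb
        have hsub : Set.Ico (0:ℝ) (tt j.succ) ⊆ {x | x ∈ I ∧ l < |stepFun n tt β x|} := by
          rintro x ⟨hx0, hx2⟩
          have hxT : x < tt (Fin.last n) := lt_of_lt_of_le hx2 (httm.monotone (Fin.le_last _))
          have hxI : x ∈ I := hIT ⟨hx0, hxT.le⟩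
          refine ⟨hxI, ?_⟩
          obtain ⟨i, hi1, hi2⟩ := exists_block hn httm htt0 hx0 hxT
          rw [habs, stepFun_apply httm β hi1 hi2]
          have hij : i ≤ j := by
            have hlt : (i.castSucc : Fin (n+1)) < j.succ :=
              httm.lt_iff_lt.1 (lt_of_le_of_lt hi1 hx2)
            rw [Fin.lt_def, Fin.coe_castSucc, Fin.val_succ] at hlt
            rw [Fin.le_def]; omega
          exact lt_of_lt_of_le hlb (hβ hij)
        have hm := measure_mono (μ := volume) hsub
        rw [Real.volume_Ico, sub_zero] at hm
        have h2 := le_trans hm hvol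
        have := (ENNReal.ofReal_le_ofReal_iff hs).1 h2
        linarith
      · intro hbl
        refine ⟨lt_of_lt_of_le (hβpos j) hbl, ?_⟩
        have hsub : {x | x ∈ I ∧ l < |stepFun n tt β x|} ⊆ Set.Ico (0:ℝ) (tt j.castSucc) := by
          rintro x ⟨hxI, hxl⟩
          rw [habs] at hxl
          have hpos : stepFun n tt β x ≠ 0 :=
            ne_of_gt (lt_trans (lt_of_lt_of_le (hβpos j) hbl) hxl)
          obtain ⟨i, hi1, hi2⟩ := mem_block_of_ne_zero hpos
          rw [stepFun_apply httm β hi1 hi2] at hxl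
          have hij : i < j := by
            by_contra hji
            push_neg at hji
            exact absurd (lt_of_le_of_lt hbl hxl) (not_lt.2 (hβ hji))
          have hle : (i.succ : Fin (n+1)) ≤ j.castSucc := by
            rw [Fin.le_def, Fin.val_succ, Fin.coe_castSucc]
            exact hij
          exact ⟨le_trans (httnn _) hi1, lt_of_lt_of_le hi2 (httm.monotone hle)⟩
        calc volume {x | x ∈ I ∧ l < |stepFun n tt β x|}
            ≤ volume (Set.Ico (0:ℝ) (tt j.castSucc)) := measure_mono hsub
          _ = ENNReal.ofReal (tt j.castSucc) := by rw [Real.volume_Ico, sub_zero]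
          _ ≤ ENNReal.ofReal s := ENNReal.ofReal_le_ofReal hj1
    rw [decRearr, hset, csInf_Ici, stepFun_apply httm β hj1 hj2]
  · push_neg at hsT
    have hset : {l : ℝ | 0 < l ∧ volume {x | x ∈ I ∧ l < |stepFun n tt β x|} ≤ ENNReal.ofReal s}
        = Set.Ioi 0 := by
      ext l
      simp only [Set.mem_setOf_eq, Set.mem_Ioi]
      constructor
      · exact fun h => h.1
      · intro hl
        refine ⟨hl, ?_⟩
        have hsub : {x | x ∈ I ∧ l < |stepFun n tt β x|} ⊆ Set.Ico (0:ℝ) (tt (Fin.last n)) := by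
          rintro x ⟨hxI, hxl⟩
          rw [habs] at hxl
          have hpos : stepFun n tt β x ≠ 0 := ne_of_gt (lt_trans hl hxl)
          obtain ⟨i, hi1, hi2⟩ := mem_block_of_ne_zero hpos
          exact ⟨le_trans (httnn _) hi1,
            lt_of_lt_of_le hi2 (httm.monotone (Fin.le_last _))⟩
        calc volume {x | x ∈ I ∧ l < |stepFun n tt β x|}
            ≤ volume (Set.Ico (0:ℝ) (tt (Fin.last n))) := measure_mono hsub
          _ = ENNReal.ofReal (tt (Fin.last n)) := by rw [Real.volume_Ico, sub_zero]
          _ ≤ ENNReal.ofReal s := ENNReal.ofReal_le_ofReal hsT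
    rw [decRearr, hset, csInf_Ioi, stepFun_eq_zero_of_ge httm β hsT]

end Aux3
section Aux4
open MeasureTheory

lemma lint_eq_ofReal {F : ℝ → ℝ} {s : Set ℝ} (hs : MeasurableSet s)
    (hF : IntegrableOn F s) (hnn : ∀ x ∈ s, 0 ≤ F x) :
    ∫⁻ x in s, ENNReal.ofReal (F x) = ENNReal.ofReal (∫ x in s, F x) :=
  (ofReal_integral_eq_lintegral_ofReal hF
    ((ae_restrict_of_forall_mem hs hnn).mono fun _ h => h)).symm

lemma integral_Ioo_split {F : ℝ → ℝ} {l u v : ℝ} (h0 : l ≤ u) (huv : u ≤ v)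
    (hF : IntegrableOn F (Set.Ioo l v)) :
    ∫ s in Set.Ioo l v, F s = (∫ s in Set.Ioo l u, F s) + ∫ s in Set.Ioo u v, F s := by
  have hF' : IntegrableOn F (Set.Ioc l v) := (integrableOn_Ioc_iff_integrableOn_Ioo enorm_ne_top).2 hF
  have key : ∫ s in Set.Ioc l v, F s
      = (∫ s in Set.Ioc l u, F s) + ∫ s in Set.Ioc u v, F s := by
    rw [← setIntegral_union (Set.Ioc_disjoint_Ioc_of_le le_rfl) measurableSet_Ioc
      (hF'.mono_set (Set.Ioc_subset_Ioc_right huv)) (hF'.mono_set (Set.Ioc_subset_Ioc_left h0)),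
      Set.Ioc_union_Ioc_eq_Ioc h0 huv]
  simpa only [integral_Ioc_eq_integral_Ioo] using key

lemma modular_stepFun {n : ℕ} (hn : 0 < n) {tt : Fin (n+1) → ℝ} (httm : StrictMono tt)
    (htt0 : tt 0 = 0) {I : Set ℝ} (hImeas : MeasurableSet I)
    (hIT : Set.Icc 0 (tt (Fin.last n)) ⊆ I) {φ : ℝ → ℝ} (hφ0 : φ 0 = 0)
    (hφnn : ∀ t, 0 ≤ t → 0 ≤ φ t)
    {a β : Fin n → ℝ} (hanneg : ∀ i, 0 ≤ a i) (hβpos : ∀ i, 0 < β i) :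
    (∫⁻ t in I, phiRatio φ (stepFun n tt a t) (stepFun n tt β t)) =
      ENNReal.ofReal (∑ i : Fin n, φ (a i / β i) * β i * (tt i.succ - tt i.castSucc)) := by
  set T := tt (Fin.last n) with hT
  have hIcoI : Set.Ico (0:ℝ) T ⊆ I := fun x hx => hIT ⟨hx.1, hx.2.le⟩
  have hsplit : I = Set.Ico 0 T ∪ (I \ Set.Ico 0 T) := (Set.union_diff_cancel hIcoI).symm
  rw [hsplit, lintegral_union (hImeas.diff measurableSet_Ico) disjoint_sdiff_right]
  have h2 : (∫⁻ t in I \ Set.Ico 0 T, phiRatio φ (stepFun n tt a t) (stepFun n tt β t)) = 0 := by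
    rw [setLIntegral_congr_fun (hImeas.diff measurableSet_Ico)
      (fun t ht => ?_), lintegral_zero]
    rcases ht with ⟨-, hnot⟩
    rw [Set.mem_Ico] at hnot
    push_neg at hnot
    have ht' : t < 0 ∨ T ≤ t := by
      rcases lt_or_ge t 0 with h | h
      · exact Or.inl h
      · exact Or.inr (hnot h)
    have ha0 : stepFun n tt a t = 0 := by
      rcases ht' with h | h
      · exact stepFun_eq_zero_of_neg httm htt0 a h
      · exact stepFun_eq_zero_of_ge httm a h
    have hb0 : stepFun n tt β t = 0 := by
      rcases ht' with h | h
      · exact stepFun_eq_zero_of_neg httm htt0 β h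
      · exact stepFun_eq_zero_of_ge httm β h
    rw [ha0, hb0, phiRatio]
    simp
  rw [h2, add_zero, ← iUnion_blocks hn httm htt0]
  rw [lintegral_iUnion (fun i => measurableSet_Ico) ?pw]
  case pw =>
    intro i j hij
    simp only [Function.onFun]
    rw [Set.Ico_disjoint_Ico]
    rcases lt_or_gt_of_ne hij with h | h
    · have hv : (i:ℕ) < (j:ℕ) := h
      have hle : (i.succ : Fin (n+1)) ≤ j.castSucc := by
        rw [Fin.le_def, Fin.val_succ, Fin.coe_castSucc]; omega
      exact le_trans (min_le_left _ _) (le_trans (httm.monotone hle) (le_max_right _ _))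
    · have hv : (j:ℕ) < (i:ℕ) := h
      have hle : (j.succ : Fin (n+1)) ≤ i.castSucc := by
        rw [Fin.le_def, Fin.val_succ, Fin.coe_castSucc]; omega
      exact le_trans (min_le_right _ _) (le_trans (httm.monotone hle) (le_max_left _ _))
  rw [tsum_fintype]
  have hterm : ∀ i : Fin n,
      (∫⁻ t in Set.Ico (tt i.castSucc) (tt i.succ),
        phiRatio φ (stepFun n tt a t) (stepFun n tt β t))
      = ENNReal.ofReal (φ (a i / β i) * β i * (tt i.succ - tt i.castSucc)) := by
    intro i
    have hconst : ∀ t ∈ Set.Ico (tt i.castSucc) (tt i.succ),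
        phiRatio φ (stepFun n tt a t) (stepFun n tt β t)
          = ENNReal.ofReal (φ (a i / β i) * β i) := by
      intro t ht
      rw [Set.mem_Ico] at ht
      rw [stepFun_apply httm a ht.1 ht.2, stepFun_apply httm β ht.1 ht.2, phiRatio,
        if_neg (hβpos i).ne']
    have hnn1 : 0 ≤ φ (a i / β i) * β i :=
      mul_nonneg (hφnn _ (div_nonneg (hanneg i) (hβpos i).le)) (hβpos i).le
    rw [setLIntegral_congr_fun measurableSet_Ico hconst,
      setLIntegral_const, Real.volume_Ico, ← ENNReal.ofReal_mul hnn1]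
  simp_rw [hterm]
  rw [← ENNReal.ofReal_sum_of_nonneg]
  intro i _
  have hlen : 0 ≤ tt i.succ - tt i.castSucc :=
    sub_nonneg.2 (httm.monotone (Fin.castSucc_le_succ i))
  exact mul_nonneg (mul_nonneg (hφnn _ (div_nonneg (hanneg i) (hβpos i).le)) (hβpos i).le) hlen

end Aux4
set_option maxHeartbeats 2000000

theorem statement10 (I : Set ℝ) (hI : OLDomain I) (φ w : ℝ → ℝ)
    (hφ : NFun φ) (hw : IsWeight I w)
    (n : ℕ) (hn : 0 < n) (tt : Fin (n+1) → ℝ) (a : Fin n → ℝ)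
    (htt0 : tt 0 = 0) (httm : StrictMono tt) (httI : tt (Fin.last n) ∈ I)
    (ha : StrictAnti a) (hapos : ∀ i, 0 < a i)
    (b : Fin n → ℝ) (hb : Antitone b) (hbpos : ∀ i, 0 < b i)
    (hsub : Submaj I w (stepFun n tt b))
    (hmin : (∫⁻ t in I, phiRatio φ (stepFun n tt a t) (stepFun n tt b t))
        = Pmod I φ w (stepFun n tt a)) :
    (∫ s in Ioo (0:ℝ) (tt (Fin.last n)), stepFun n tt b s)
      = ∫ s in Ioo (0:ℝ) (tt (Fin.last n)), w s := by
  classical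
  obtain ⟨⟨hφ0, hconv, hsm, hφnn⟩, hlim0, hlimtop⟩ := id hφ
  obtain ⟨hwpos, hwanti, hwint⟩ := id hw
  set T := tt (Fin.last n) with hTdef
  have hT0 : 0 ≤ T := by
    have := httm.monotone (Fin.zero_le (Fin.last n)); rw [htt0] at this; exact this
  have hTpos : 0 < T := by
    rw [← htt0]
    exact httm (by rw [Fin.lt_def]; simp [Fin.last]; omega)
  have hIcc : Set.Icc 0 T ⊆ I := by
    rcases hI with hI' | ⟨α, hα, hI'⟩
    · rw [hI']; intro x hx; exact hx.1
    · rw [hI'] at httI ⊢; intro x hx; exact ⟨hx.1, lt_of_le_of_lt hx.2 httI.2⟩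
  have hImeas : MeasurableSet I := by
    rcases hI with hI' | ⟨α, hα, hI'⟩ <;> rw [hI']
    exacts [measurableSet_Ici, measurableSet_Ico]
  have hInn : ∀ t ∈ I, (0:ℝ) ≤ t := by
    rcases hI with hI' | ⟨α, hα, hI'⟩ <;> rw [hI'] <;> intro t ht
    exacts [ht, ht.1]
  have hIooI : ∀ t ∈ I, Set.Ioo (0:ℝ) t ⊆ I := by
    rcases hI with hI' | ⟨α, hα, hI'⟩ <;> rw [hI'] <;> intro t ht x hx
    exacts [hx.1.le, ⟨hx.1.le, lt_trans hx.2 ht.2⟩]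
  have hgnn : ∀ x, 0 ≤ stepFun n tt b x := stepFun_nonneg tt (fun i => (hbpos i).le)
  -- real form of submajorization
  have hsub_real : ∀ t, t ∈ I →
      (∫ s in Set.Ioo (0:ℝ) t, stepFun n tt b s) ≤ ∫ s in Set.Ioo (0:ℝ) t, w s := by
    intro t ht
    have h1 := hsub t ht
    have e1 : ∫⁻ s in Set.Ioo (0:ℝ) t, ENNReal.ofReal (decRearr I (stepFun n tt b) s)
        = ∫⁻ s in Set.Ioo (0:ℝ) t, ENNReal.ofReal (stepFun n tt b s) :=
      setLIntegral_congr_fun measurableSet_Ioo (fun s hs => by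
        rw [decRearr_stepFun hn httm htt0 hIcc hb hbpos hs.1.le])
    rw [e1, lint_eq_ofReal measurableSet_Ioo (stepFun_integrable tt b).integrableOn
        (fun x _ => hgnn x),
      lint_eq_ofReal measurableSet_Ioo (hwint t ht)
        (fun x hx => (hwpos x (hIooI t ht hx)).le)] at h1
    exact (ENNReal.ofReal_le_ofReal_iff (setIntegral_nonneg measurableSet_Ioo
      (fun x hx => (hwpos x (hIooI t ht hx)).le))).1 h1
  have hle := hsub_real T httI
  refine le_antisymm hle ?_
  by_contra hne
  push_neg at hne
  obtain ⟨GT, hGTdef⟩ : ∃ x : ℝ, x = ∫ s in Set.Ioo (0:ℝ) T, stepFun n tt b s := ⟨_, rfl⟩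
  obtain ⟨WT, hWTdef⟩ : ∃ x : ℝ, x = ∫ s in Set.Ioo (0:ℝ) T, w s := ⟨_, rfl⟩
  have hlt : GT < WT := by rw [hGTdef, hWTdef]; exact hne
  -- minimal index of the last constancy block of b
  set last1 : Fin n := ⟨n-1, by omega⟩ with hlast1
  have hlast1succ : last1.succ = Fin.last n := by
    ext; simp [hlast1, Fin.val_succ]; omega
  set bmin := b last1 with hbmin
  have hbmin_le : ∀ i, bmin ≤ b i := fun i => hb (by rw [Fin.le_def]; simp [hlast1]; omega)
  have hfilne : (Finset.univ.filter (fun i : Fin n => b i = bmin)).Nonempty :=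
    ⟨last1, by simp [hbmin]⟩
  set K := (Finset.univ.filter (fun i : Fin n => b i = bmin)).min' hfilne with hKdef
  have hKmem : b K = bmin := by
    have := Finset.min'_mem _ hfilne
    simpa using this
  have hKle : ∀ i, b i = bmin → K ≤ i := fun i hi =>
    Finset.min'_le _ _ (by simp [hi])
  have hbtail : ∀ i, K ≤ i → b i = bmin := fun i hKi =>
    le_antisymm (hKmem ▸ hb hKi) (hbmin_le i)
  have hbgap : ∀ i : Fin n, i < K → bmin < b i := fun i hiK =>
    lt_of_le_of_ne (hbmin_le i) fun he => absurd (hKle i he.symm) (not_le.2 hiK)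
  set c := tt K.castSucc with hcdef
  have hc0 : 0 ≤ c := by
    have := httm.monotone (Fin.zero_le K.castSucc); rw [htt0] at this; exact this
  have hcT : c < T := httm (Fin.castSucc_lt_last K)
  have hcI : c ∈ I := hIcc ⟨hc0, hcT.le⟩
  -- tail values
  have htail_g : ∀ s, c ≤ s → s < T → stepFun n tt b s = bmin := by
    intro s hcs hsT
    obtain ⟨i, hi1, hi2⟩ := exists_block hn httm htt0 (le_trans hc0 hcs) hsT
    have hKi : K ≤ i := by
      by_contra hcon
      push_neg at hcon
      have hv : (i:ℕ) < (K:ℕ) := hcon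
      have hle2 : (i.succ : Fin (n+1)) ≤ K.castSucc := by
        rw [Fin.le_def, Fin.val_succ, Fin.coe_castSucc]; omega
      have := httm.monotone hle2
      linarith
    rw [stepFun_apply httm b hi1 hi2, hbtail i hKi]
  obtain ⟨Gc, hGc⟩ : ∃ x : ℝ, x = ∫ s in Set.Ioo (0:ℝ) c, stepFun n tt b s := ⟨_, rfl⟩
  obtain ⟨Wc, hWc⟩ : ∃ x : ℝ, x = ∫ s in Set.Ioo (0:ℝ) c, w s := ⟨_, rfl⟩
  have hGcWc : Gc ≤ Wc := by rw [hGc, hWc]; exact hsub_real c hcI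
  have hGT_split : GT = Gc + bmin * (T - c) := by
    rw [hGTdef, hGc, integral_Ioo_split hc0 hcT.le (stepFun_integrable tt b).integrableOn]
    congr 1
    rw [setIntegral_congr_fun measurableSet_Ioo
      (fun s hs => htail_g s hs.1.le hs.2), setIntegral_const, Real.volume_real_Ioo_of_le (by linarith),
      smul_eq_mul, mul_comm]
  -- choice of δ
  have hδ1 : 0 < (WT - GT) / (T - c) := div_pos (by linarith) (by linarith)
  obtain ⟨δ, hδpos, hδ1le, hδgap⟩ : ∃ δ : ℝ, 0 < δ ∧ δ ≤ (WT - GT) / (T - c) ∧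
      ∀ i : Fin n, i < K → bmin + δ ≤ b i := by
    by_cases hK0 : (K:ℕ) = 0
    · refine ⟨(WT - GT) / (T - c), hδ1, le_rfl, fun i hi => ?_⟩
      have : (i:ℕ) < (K:ℕ) := hi
      omega
    · set K' : Fin n := ⟨(K:ℕ)-1, by omega⟩ with hK'
      have hK'K : K' < K := by rw [Fin.lt_def]; simp [hK']; omega
      have hgap : 0 < b K' - bmin := by linarith [hbgap K' hK'K]
      refine ⟨min ((WT - GT) / (T - c)) (b K' - bmin), lt_min hδ1 hgap,
        min_le_left _ _, fun i hi => ?_⟩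
      have hv : (i:ℕ) < (K:ℕ) := hi
      have h1 : b K' ≤ b i := hb (by rw [Fin.le_def]; simp [hK']; omega)
      have h2 := min_le_right ((WT - GT) / (T - c)) (b K' - bmin)
      linarith
  have hδT : δ * (T - c) ≤ WT - GT := by
    have := mul_le_mul_of_nonneg_right hδ1le (by linarith : (0:ℝ) ≤ T - c)
    rwa [div_mul_cancel₀ _ (by linarith : T - c ≠ 0)] at this
  -- perturbed step heights
  set b' : Fin n → ℝ := fun i => if K ≤ i then b i + δ else b i with hb'def
  have hb'pos : ∀ i, 0 < b' i := by
    intro i; rw [hb'def]; dsimp only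
    split
    · linarith [hbpos i]
    · exact hbpos i
  have hb'anti : Antitone b' := by
    intro i j hij
    rw [hb'def]; dsimp only
    by_cases hiK : K ≤ i
    · rw [if_pos hiK, if_pos (le_trans hiK hij)]
      linarith [hb hij]
    · by_cases hjK : K ≤ j
      · rw [if_neg hiK, if_pos hjK, hbtail j hjK]
        exact hδgap i (not_le.1 hiK)
      · rw [if_neg hiK, if_neg hjK]
        exact hb hij
  have hh_nn : ∀ x, 0 ≤ stepFun n tt b' x := stepFun_nonneg tt (fun i => (hb'pos i).le)
  have hh_eq_g : ∀ s, s < c → stepFun n tt b' s = stepFun n tt b s := by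
    intro s hs
    rcases lt_or_ge s 0 with h0 | h0
    · rw [stepFun_eq_zero_of_neg httm htt0 _ h0, stepFun_eq_zero_of_neg httm htt0 _ h0]
    · obtain ⟨i, hi1, hi2⟩ := exists_block hn httm htt0 h0 (lt_trans hs hcT)
      have hiK : ¬ K ≤ i := by
        intro hKi
        have hle2 : (K.castSucc : Fin (n+1)) ≤ i.castSucc := by
          rw [Fin.le_def, Fin.coe_castSucc, Fin.coe_castSucc]; exact hKi
        have := httm.monotone hle2
        linarith
      rw [stepFun_apply httm b' hi1 hi2, stepFun_apply httm b hi1 hi2, hb'def]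
      dsimp only
      rw [if_neg hiK]
  have htail_h : ∀ s, c ≤ s → s < T → stepFun n tt b' s = bmin + δ := by
    intro s hcs hsT
    obtain ⟨i, hi1, hi2⟩ := exists_block hn httm htt0 (le_trans hc0 hcs) hsT
    have hKi : K ≤ i := by
      by_contra hcon
      push_neg at hcon
      have hv : (i:ℕ) < (K:ℕ) := hcon
      have hle2 : (i.succ : Fin (n+1)) ≤ K.castSucc := by
        rw [Fin.le_def, Fin.val_succ, Fin.coe_castSucc]; omega
      have := httm.monotone hle2
      linarith
    rw [stepFun_apply httm b' hi1 hi2, hb'def]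
    dsimp only
    rw [if_pos hKi, hbtail i hKi]
  have hGc_h : (∫ s in Set.Ioo (0:ℝ) c, stepFun n tt b' s) = Gc := by
    rw [hGc]
    exact setIntegral_congr_fun measurableSet_Ioo (fun s hs => hh_eq_g s hs.2)
  -- key partial-integral estimate for the new function, c < t ≤ T
  have keyT : ∀ t, c < t → t ≤ T →
      (∫⁻ s in Set.Ioo (0:ℝ) t, ENNReal.ofReal (stepFun n tt b' s))
        ≤ ∫⁻ s in Set.Ioo (0:ℝ) t, ENNReal.ofReal (w s) := by
    intro t hct htT
    have htI : t ∈ I := hIcc ⟨le_trans hc0 hct.le, htT⟩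
    have hwInt : IntegrableOn w (Set.Ioo 0 t) := hwint t htI
    have hwIntT : IntegrableOn w (Set.Ioo 0 T) := hwint T httI
    rw [lint_eq_ofReal measurableSet_Ioo (stepFun_integrable tt b').integrableOn
        (fun x _ => hh_nn x),
      lint_eq_ofReal measurableSet_Ioo hwInt (fun x hx => (hwpos x (hIooI t htI hx)).le)]
    apply ENNReal.ofReal_le_ofReal
    have hsplith : (∫ s in Set.Ioo (0:ℝ) t, stepFun n tt b' s)
        = Gc + (bmin + δ) * (t - c) := by
      rw [integral_Ioo_split hc0 hct.le (stepFun_integrable tt b').integrableOn, hGc_h]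
      congr 1
      rw [setIntegral_congr_fun measurableSet_Ioo
        (fun s hs => htail_h s hs.1.le (lt_of_lt_of_le hs.2 htT)), setIntegral_const,
        Real.volume_real_Ioo_of_le (by linarith), smul_eq_mul, mul_comm]
    obtain ⟨A, hA⟩ : ∃ x : ℝ, x = ∫ s in Set.Ioo c t, w s := ⟨_, rfl⟩
    obtain ⟨B, hB⟩ : ∃ x : ℝ, x = ∫ s in Set.Ioo t T, w s := ⟨_, rfl⟩
    have hsplitw : (∫ s in Set.Ioo (0:ℝ) t, w s) = Wc + A := by
      rw [hWc, hA]; exact integral_Ioo_split hc0 hct.le hwInt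
    have hsplitwT : WT = Wc + A + B := by
      have h1 : (∫ s in Set.Ioo (0:ℝ) T, w s) = Wc + ∫ s in Set.Ioo c T, w s := by
        rw [hWc]; exact integral_Ioo_split hc0 hcT.le hwIntT
      have h2 : (∫ s in Set.Ioo c T, w s) = A + B := by
        rw [hA, hB]
        exact integral_Ioo_split hct.le htT
          (hwIntT.mono_set (fun x hx => ⟨lt_of_le_of_lt hc0 hx.1, hx.2⟩))
      rw [hWTdef, h1, h2, add_assoc]
    have hwt_nn : 0 ≤ w t := (hwpos t htI).le
    have hAlb : (t - c) * w t ≤ A := by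
      have hmono : ∀ x ∈ Set.Ioo c t, w t ≤ w x := fun x hx =>
        hwanti (hIcc ⟨le_trans hc0 hx.1.le, le_trans hx.2.le htT⟩) htI hx.2.le
      have hm := setIntegral_mono_on
        (integrableOn_const (by rw [Real.volume_Ioo]; exact ENNReal.ofReal_ne_top))
        (hwInt.mono_set (fun x hx => ⟨lt_of_le_of_lt hc0 hx.1, hx.2⟩))
        measurableSet_Ioo hmono
      rw [setIntegral_const, Real.volume_real_Ioo_of_le (by linarith),
        smul_eq_mul] at hm
      rw [hA]
      calc (t - c) * w t = (t - c) • w t := by rw [smul_eq_mul]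
        _ ≤ _ := by rw [smul_eq_mul]; linarith [hm]
    have hBub : B ≤ (T - t) * w t := by
      have hmono : ∀ x ∈ Set.Ioo t T, w x ≤ w t := fun x hx =>
        hwanti htI (hIcc ⟨le_trans hc0 (le_trans hct.le hx.1.le), hx.2.le⟩) hx.1.le
      have hm := setIntegral_mono_on
        (hwIntT.mono_set (fun x hx => ⟨lt_of_le_of_lt (le_trans hc0 hct.le) hx.1, hx.2⟩))
        (integrableOn_const (by rw [Real.volume_Ioo]; exact ENNReal.ofReal_ne_top))
        measurableSet_Ioo hmono
      rw [setIntegral_const, Real.volume_real_Ioo_of_le (by linarith),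
        smul_eq_mul] at hm
      rw [hB]
      linarith [hm]
    have he1 : (t - c) * B ≤ A * (T - t) := by
      nlinarith [mul_le_mul_of_nonneg_left hBub (by linarith : (0:ℝ) ≤ t - c),
        mul_le_mul_of_nonneg_right hAlb (by linarith : (0:ℝ) ≤ T - t)]
    have heA : (t - c) * (WT - Wc) ≤ A * (T - c) := by nlinarith [he1]
    have hmain : (Gc + (bmin + δ) * (t - c)) * (T - c) ≤ (Wc + A) * (T - c) := by
      have hm1 : (bmin + δ) * (T - c) ≤ WT - Gc := by nlinarith [hδT]
      have hm2 := mul_le_mul_of_nonneg_left hm1 (by linarith : (0:ℝ) ≤ t - c)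
      have hm3 : (0:ℝ) ≤ (T - t) * (Wc - Gc) :=
        mul_nonneg (by linarith) (by linarith)
      nlinarith [heA]
    have hfin := le_of_mul_le_mul_right hmain (by linarith : (0:ℝ) < T - c)
    rw [hsplith, hsplitw]
    linarith
  -- the perturbed function satisfies the submajorization
  have hsubmaj : Submaj I w (stepFun n tt b') := by
    intro t ht
    have e1 : ∫⁻ s in Set.Ioo (0:ℝ) t, ENNReal.ofReal (decRearr I (stepFun n tt b') s)
        = ∫⁻ s in Set.Ioo (0:ℝ) t, ENNReal.ofReal (stepFun n tt b' s) :=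
      setLIntegral_congr_fun measurableSet_Ioo (fun s hs => by
        rw [decRearr_stepFun hn httm htt0 hIcc hb'anti hb'pos hs.1.le])
    rw [e1]
    rcases le_or_gt t c with htc | hct
    · have e2 : ∫⁻ s in Set.Ioo (0:ℝ) t, ENNReal.ofReal (stepFun n tt b' s)
          = ∫⁻ s in Set.Ioo (0:ℝ) t, ENNReal.ofReal (decRearr I (stepFun n tt b) s) :=
        setLIntegral_congr_fun measurableSet_Ioo (fun s hs => by
          rw [hh_eq_g s (lt_of_lt_of_le hs.2 htc),
            decRearr_stepFun hn httm htt0 hIcc hb hbpos hs.1.le])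
      rw [e2]
      exact hsub t ht
    · rcases le_or_gt t T with htT | hTt
      · exact keyT t hct htT
      · have hsplit2 : Set.Ioo (0:ℝ) t = Set.Ioo 0 T ∪ Set.Ico T t :=
          (Set.Ioo_union_Ico_eq_Ioo hTpos hTt.le).symm
        rw [hsplit2, lintegral_union measurableSet_Ico
          (Set.disjoint_left.2 fun x hx1 hx2 => absurd hx2.1 (not_le.2 hx1.2))]
        have hzero : (∫⁻ s in Set.Ico T t, ENNReal.ofReal (stepFun n tt b' s)) = 0 := by
          rw [setLIntegral_congr_fun measurableSet_Ico (fun s hs => ?_),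
            lintegral_zero]
          rw [stepFun_eq_zero_of_ge httm b' hs.1, ENNReal.ofReal_zero]
        rw [hzero, add_zero]
        calc (∫⁻ s in Set.Ioo (0:ℝ) T, ENNReal.ofReal (stepFun n tt b' s))
            ≤ ∫⁻ s in Set.Ioo (0:ℝ) T, ENNReal.ofReal (w s) := keyT T hcT le_rfl
          _ ≤ ∫⁻ s in Set.Ioo (0:ℝ) T ∪ Set.Ico T t, ENNReal.ofReal (w s) :=
            lintegral_mono' (Measure.restrict_mono Set.subset_union_left le_rfl) le_rfl
  -- modular strictly decreases : contradiction with minimality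
  have hlen_pos : ∀ i : Fin n, 0 < tt i.succ - tt i.castSucc :=
    fun i => sub_pos.2 (httm i.castSucc_lt_succ)
  have hsum_lt : (∑ i : Fin n, φ (a i / b' i) * b' i * (tt i.succ - tt i.castSucc))
      < ∑ i : Fin n, φ (a i / b i) * b i * (tt i.succ - tt i.castSucc) := by
    apply Finset.sum_lt_sum
    · intro i _
      by_cases hiK : K ≤ i
      · have hbi : b i = bmin := hbtail i hiK
        have hbi' : b' i = bmin + δ := by rw [hb'def]; dsimp only; rw [if_pos hiK, hbi]
        rw [hbi', hbi]
        exact le_of_lt (mul_lt_mul_of_pos_right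
          (nfun_phiRatio_lt hφ (hapos i) (hbi ▸ hbpos i)
            (by linarith : bmin < bmin + δ)) (hlen_pos i))
      · have hbi' : b' i = b i := by rw [hb'def]; dsimp only; rw [if_neg hiK]
        rw [hbi']
    · refine ⟨last1, Finset.mem_univ _, ?_⟩
      have hiK : K ≤ last1 := hKle last1 rfl
      have hbi : b last1 = bmin := rfl
      have hbi' : b' last1 = bmin + δ := by
        rw [hb'def]; dsimp only; rw [if_pos hiK, hbi]
      rw [hbi']
      exact mul_lt_mul_of_pos_right
        (nfun_phiRatio_lt hφ (hapos last1) (hbpos last1)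
          (by linarith : bmin < bmin + δ)) (hlen_pos last1)
  have hsum_pos : 0 < ∑ i : Fin n, φ (a i / b i) * b i * (tt i.succ - tt i.castSucc) := by
    apply Finset.sum_pos'
    · intro i _
      exact mul_nonneg (mul_nonneg (hφnn _ (div_nonneg (hapos i).le (hbpos i).le))
        (hbpos i).le) (hlen_pos i).le
    · refine ⟨last1, Finset.mem_univ _, ?_⟩
      have hφpos : 0 < φ (a last1 / b last1) := by
        rw [← hφ0]
        exact hsm (Set.mem_Ici.2 (le_refl (0:ℝ)))
          (Set.mem_Ici.2 (div_nonneg (hapos last1).le (hbpos last1).le))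
          (div_pos (hapos last1) (hbpos last1))
      exact mul_pos (mul_pos hφpos (hbpos last1)) (hlen_pos last1)
  -- membership of the perturbed modular value in the Pmod index set
  have hmodb := modular_stepFun hn httm htt0 hImeas hIcc hφ0 hφnn
    (fun i => (hapos i).le) hbpos
  have hmodb' := modular_stepFun hn httm htt0 hImeas hIcc hφ0 hφnn
    (fun i => (hapos i).le) hb'pos
  have hmem : (ENNReal.ofReal (∑ i : Fin n,
      φ (a i / b' i) * b' i * (tt i.succ - tt i.castSucc)))
      ∈ { v : ℝ≥0∞ | ∃ g : ℝ → ℝ, Measurable g ∧ Submaj I w g ∧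
        v = ∫⁻ t in I, phiRatio φ (decRearr I (stepFun n tt a) t) |g t| } := by
    refine ⟨stepFun n tt b', stepFun_measurable tt b', hsubmaj, ?_⟩
    have e3 : (∫⁻ t in I, phiRatio φ (decRearr I (stepFun n tt a) t) |stepFun n tt b' t|)
        = ∫⁻ t in I, phiRatio φ (stepFun n tt a t) (stepFun n tt b' t) :=
      setLIntegral_congr_fun hImeas (fun t ht => by
        rw [decRearr_stepFun hn httm htt0 hIcc ha.antitone hapos (hInn t ht),
          abs_of_nonneg (hh_nn t)])
    rw [e3, hmodb']
  have hPle : Pmod I φ w (stepFun n tt a) ≤ ENNReal.ofReal (∑ i : Fin n,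
      φ (a i / b' i) * b' i * (tt i.succ - tt i.castSucc)) := sInf_le hmem
  have hPeq : Pmod I φ w (stepFun n tt a) = ENNReal.ofReal (∑ i : Fin n,
      φ (a i / b i) * b i * (tt i.succ - tt i.castSucc)) := by
    rw [← hmin, hmodb]
  rw [hPeq] at hPle
  have := lt_of_le_of_lt hPle
    ((ENNReal.ofReal_lt_ofReal_iff hsum_pos).2 hsum_lt)
  exact absurd this (lt_irrefl _)
end
end

section
/- Let φ be a strictly convex N-function, f = Σ_{i=1}^n a_i·χ_{A_i} with a_1 > a_2 > … > a_n > 0, A_i = [t_{i−1}, t_i), 0 = t_0 < t_1 < … < t_n < ∞, and g = Σ_{i=1}^n b_i·χ_{A_i} with b_1, …, b_n > 0. Set λ = G(t_n)/F(t_n), where F(t) = ∫₀ᵗ f and G(t) = ∫₀ᵗ g. If g ≠ λ·f, then ∫₀^{t_n} φ(f/g)·g > ∫₀^{t_n} φ(f/(λf))·λf = φ(1/λ)·λ·F(t_n). -/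
open MeasureTheory Set Filter
open scoped ENNReal

noncomputable section

lemma stepFun_eq {n : ℕ} {tt : Fin (n+1) → ℝ} (httm : StrictMono tt)
    (c : Fin n → ℝ) (i : Fin n) {s : ℝ}
    (h1 : tt i.castSucc ≤ s) (h2 : s < tt i.succ) :
    stepFun n tt c s = c i := by
  unfold stepFun
  rw [Finset.sum_eq_single i]
  · exact if_pos ⟨h1, h2⟩
  · intro j _ hj
    rcases lt_or_gt_of_ne hj with hlt | hgt
    · have hle : tt j.succ ≤ tt i.castSucc := httm.monotone (by
        rw [Fin.le_def, Fin.val_succ, Fin.coe_castSucc]; exact hlt)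
      rw [ite_eq_right_iff]
      rintro ⟨-, h⟩
      exact ((not_lt.2 (hle.trans h1)) h).elim
    · have hle : tt i.succ ≤ tt j.castSucc := httm.monotone (by
        rw [Fin.le_def, Fin.val_succ, Fin.coe_castSucc]; exact hgt)
      rw [ite_eq_right_iff]
      rintro ⟨h, -⟩
      exact ((not_lt.2 h) (h2.trans_le hle)).elim
  · intro h; exact (h (Finset.mem_univ i)).elim

lemma integral_step {n : ℕ} {tt : Fin (n+1) → ℝ} (httm : StrictMono tt)
    (h : ℝ → ℝ) (c : Fin n → ℝ)
    (hc : ∀ i : Fin n, ∀ s ∈ Ioo (tt i.castSucc) (tt i.succ), h s = c i) :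
    ∫ t in Ioo (tt 0) (tt (Fin.last n)), h t
      = ∑ i : Fin n, c i * (tt i.succ - tt i.castSucc) := by
  set u : ℕ → ℝ := fun k => tt ⟨min k n, Nat.lt_succ_of_le (min_le_right _ _)⟩ with hu
  have hcast : ∀ i : Fin n, u i = tt i.castSucc ∧ u (i+1) = tt i.succ := by
    intro i
    have hi := i.isLt
    constructor <;>
    · simp only [hu]; congr 1; ext
      simp only [Fin.val_succ, Fin.coe_castSucc]; omega
  have hle : ∀ i : Fin n, tt i.castSucc ≤ tt i.succ :=
    fun i => (httm (Fin.castSucc_lt_succ : i.castSucc < i.succ)).le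
  have hInt : ∀ k < n, IntervalIntegrable h volume (u k) (u (k+1)) := by
    intro k hk
    obtain ⟨e1, e2⟩ := hcast ⟨k, hk⟩
    rw [e1, e2, intervalIntegrable_iff_integrableOn_Ioc_of_le (hle ⟨k, hk⟩),
      integrableOn_Ioc_iff_integrableOn_Ioo]
    exact (integrableOn_const (by simp) (by simp) : IntegrableOn (fun _ => c ⟨k, hk⟩)
        (Ioo (tt (⟨k, hk⟩ : Fin n).castSucc) (tt (⟨k, hk⟩ : Fin n).succ)) volume).congr_fun
      (fun s hs => (hc ⟨k, hk⟩ s hs).symm) measurableSet_Ioo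
  have key := intervalIntegral.sum_integral_adjacent_intervals (f := h) (μ := volume) hInt
  have hu0 : u 0 = tt 0 := by simp [hu]
  have hun : u n = tt (Fin.last n) := by simp [hu]; rfl
  rw [hu0, hun] at key
  have each : ∀ i : Fin n, ∫ x in u i..u (i+1), h x
      = c i * (tt i.succ - tt i.castSucc) := by
    intro i
    obtain ⟨e1, e2⟩ := hcast i
    rw [e1, e2, intervalIntegral.integral_of_le (hle i),
      MeasureTheory.integral_Ioc_eq_integral_Ioo,
      setIntegral_congr_fun measurableSet_Ioo (fun s hs => hc i s hs),
      setIntegral_const, measureReal_def, Real.volume_Ioo,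
      ENNReal.toReal_ofReal (by linarith [hle i]), smul_eq_mul, mul_comm]
  set v : ℕ → ℝ := fun k => if hk : k < n then
      c ⟨k, hk⟩ * (tt (⟨k, hk⟩ : Fin n).succ - tt (⟨k, hk⟩ : Fin n).castSucc) else 0 with hv
  have h0n : tt 0 ≤ tt (Fin.last n) := httm.monotone (Fin.zero_le _)
  calc ∫ t in Ioo (tt 0) (tt (Fin.last n)), h t
      = ∫ x in (tt 0)..(tt (Fin.last n)), h x := by
        rw [intervalIntegral.integral_of_le h0n,
          MeasureTheory.integral_Ioc_eq_integral_Ioo]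
    _ = ∑ k ∈ Finset.range n, ∫ x in u k..u (k+1), h x := key.symm
    _ = ∑ k ∈ Finset.range n, v k := by
        refine Finset.sum_congr rfl fun k hk => ?_
        have hkn := Finset.mem_range.1 hk
        rw [each ⟨k, hkn⟩, hv]; simp [hkn]
    _ = ∑ i : Fin n, v i := (Fin.sum_univ_eq_sum_range v n).symm
    _ = ∑ i : Fin n, c i * (tt i.succ - tt i.castSucc) := by
        refine Finset.sum_congr rfl fun i _ => ?_
        exact dif_pos i.isLt

theorem statement12 (φ : ℝ → ℝ) (hφ : NFun φ) (hsc : StrictConvexOn ℝ (Ici 0) φ)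
    (n : ℕ) (hn : 0 < n) (tt : Fin (n+1) → ℝ) (a b : Fin n → ℝ)
    (htt0 : tt 0 = 0) (httm : StrictMono tt)
    (ha : StrictAnti a) (hapos : ∀ i, 0 < a i) (hbpos : ∀ i, 0 < b i)
    (lam : ℝ)
    (hlam : lam = (∫ s in Ioo (0:ℝ) (tt (Fin.last n)), stepFun n tt b s) /
        ∫ s in Ioo (0:ℝ) (tt (Fin.last n)), stepFun n tt a s)
    (hne : ∃ i, b i ≠ lam * a i) :
    ((∫ t in Ioo (0:ℝ) (tt (Fin.last n)),
        φ (stepFun n tt a t / stepFun n tt b t) * stepFun n tt b t)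
      > ∫ t in Ioo (0:ℝ) (tt (Fin.last n)),
          φ (stepFun n tt a t / (lam * stepFun n tt a t)) * (lam * stepFun n tt a t)) ∧
    ((∫ t in Ioo (0:ℝ) (tt (Fin.last n)),
        φ (stepFun n tt a t / (lam * stepFun n tt a t)) * (lam * stepFun n tt a t))
      = φ (1 / lam) * lam * ∫ s in Ioo (0:ℝ) (tt (Fin.last n)), stepFun n tt a s) := by
  have hnty : Nonempty (Fin n) := ⟨⟨0, hn⟩⟩
  set Δ : Fin n → ℝ := fun i => tt i.succ - tt i.castSucc with hΔdef
  have hΔ : ∀ i, 0 < Δ i := fun i => sub_pos.2 (httm (Fin.castSucc_lt_succ : i.castSucc < i.succ))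
  set F : ℝ := ∑ i : Fin n, a i * Δ i with hFdef
  set G : ℝ := ∑ i : Fin n, b i * Δ i with hGdef
  have hstepa : (∫ s in Ioo (0:ℝ) (tt (Fin.last n)), stepFun n tt a s) = F := by
    rw [← htt0]
    exact integral_step httm _ _ (fun i s hs => stepFun_eq httm a i hs.1.le hs.2)
  have hstepb : (∫ s in Ioo (0:ℝ) (tt (Fin.last n)), stepFun n tt b s) = G := by
    rw [← htt0]
    exact integral_step httm _ _ (fun i s hs => stepFun_eq httm b i hs.1.le hs.2)
  have hF : 0 < F := Finset.sum_pos
    (fun i _ => mul_pos (hapos i) (hΔ i)) Finset.univ_nonempty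
  have hG : 0 < G := Finset.sum_pos
    (fun i _ => mul_pos (hbpos i) (hΔ i)) Finset.univ_nonempty
  have hlam' : lam = G / F := by rw [hlam, hstepa, hstepb]
  have hlampos : 0 < lam := hlam' ▸ div_pos hG hF
  have hinvlam : 1 / lam = F / G := by rw [hlam', one_div_div]
  -- the middle integral
  have hmid : (∫ t in Ioo (0:ℝ) (tt (Fin.last n)),
      φ (stepFun n tt a t / (lam * stepFun n tt a t)) * (lam * stepFun n tt a t))
      = ∑ i : Fin n, (φ (1/lam) * (lam * a i)) * Δ i := by
    rw [← htt0]
    refine integral_step httm _ _ (fun i s hs => ?_)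
    rw [stepFun_eq httm a i hs.1.le hs.2]
    congr 2
    rw [mul_comm, div_mul_eq_div_div, div_self (hapos i).ne']
  have hmid' : (∫ t in Ioo (0:ℝ) (tt (Fin.last n)),
      φ (stepFun n tt a t / (lam * stepFun n tt a t)) * (lam * stepFun n tt a t))
      = φ (1/lam) * lam * F := by
    rw [hmid, hFdef, Finset.mul_sum]
    exact Finset.sum_congr rfl fun i _ => by ring
  refine ⟨?_, by rw [hmid', hstepa]⟩
  -- the left integral
  have hleft : (∫ t in Ioo (0:ℝ) (tt (Fin.last n)),
      φ (stepFun n tt a t / stepFun n tt b t) * stepFun n tt b t)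
      = ∑ i : Fin n, (φ (a i / b i) * b i) * Δ i := by
    rw [← htt0]
    refine integral_step httm _ _ (fun i s hs => ?_)
    rw [stepFun_eq httm a i hs.1.le hs.2, stepFun_eq httm b i hs.1.le hs.2]
  rw [hleft, hmid']
  -- Jensen
  set w : Fin n → ℝ := fun i => b i * Δ i / G with hwdef
  set p : Fin n → ℝ := fun i => a i / b i with hpdef
  have hw : ∀ i ∈ Finset.univ, 0 < w i :=
    fun i _ => div_pos (mul_pos (hbpos i) (hΔ i)) hG
  have hw1 : ∑ i : Fin n, w i = 1 := by
    rw [hwdef, ← Finset.sum_div, ← hGdef, div_self hG.ne']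
  have hwp : ∑ i : Fin n, w i • p i = F / G := by
    rw [hFdef, Finset.sum_div]
    refine Finset.sum_congr rfl fun i _ => ?_
    rw [smul_eq_mul, hwdef, hpdef]
    field_simp [(hbpos i).ne', hG.ne']
  have hmem : ∀ i ∈ Finset.univ, p i ∈ Ici (0:ℝ) :=
    fun i _ => le_of_lt (div_pos (hapos i) (hbpos i))
  have hnc : ∃ j ∈ Finset.univ, ∃ k ∈ Finset.univ, p j ≠ p k := by
    obtain ⟨i, hi⟩ := hne
    have hpi : p i ≠ F / G := by
      intro hEq
      apply hi
      rw [hlam']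
      rw [hpdef] at hEq
      have hEq' : a i * G = F * b i :=
        (div_eq_div_iff (hbpos i).ne' hG.ne').1 hEq
      rw [div_mul_eq_mul_div, eq_div_iff hF.ne']
      linear_combination -hEq'
    by_contra hcon
    push_neg at hcon
    have : ∑ j : Fin n, w j • p j = p i := by
      have : ∀ j ∈ Finset.univ, w j • p j = w j * p i := by
        intro j _
        rw [smul_eq_mul, hcon j (Finset.mem_univ j) i (Finset.mem_univ i)]
      rw [Finset.sum_congr rfl this, ← Finset.sum_mul, hw1, one_mul]
    exact hpi (this ▸ hwp)
  have jensen := hsc.map_sum_lt hw hw1 hmem hnc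
  rw [hwp] at jensen
  -- conclude
  have hmul : (∑ i : Fin n, w i • φ (p i)) * G
      = ∑ i : Fin n, (φ (a i / b i) * b i) * Δ i := by
    rw [Finset.sum_mul]
    refine Finset.sum_congr rfl fun i _ => ?_
    rw [smul_eq_mul, hwdef, hpdef]
    field_simp [(hbpos i).ne', hG.ne']
  have : φ (F / G) * G < (∑ i : Fin n, w i • φ (p i)) * G :=
    mul_lt_mul_of_pos_right jensen hG
  rw [hmul] at this
  have hrhs : φ (1/lam) * lam * F = φ (F/G) * G := by
    rw [hinvlam, hlam']
    field_simp
  rw [hrhs]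
  exact this
end
end
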